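/- arXiv:0709.3182 — 7 statements merged into one kernel-verified Lean document; each statement's English description precedes it below -/
import Mathlib

section
/- Let (A, m) be a stretched Artinian local ring of socle degree s (i.e., v(m²) = 1, m^s ≠ 0, m^{s+1} = 0) with m^j = (y₁^j) for 2 ≤ j ≤ s for some y₁ ∈ m. Then (0 : m) ∩ m² = m^s. -/
open IsLocalRing

/-- Let `(A,m)` be a stretched Artinian local ring of socle degree
`s ≥ 2`, with `m^j = (y₁^j)` for `2 ≤ j ≤ s`, `y₁^s ≠ 0` and `m^{s+1} = 0`.
Then `(0 : m) ∩ m² = m^s`. -/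
theorem stretched_socle_inter
    (A : Type*) [CommRing A] [IsLocalRing A] [IsArtinianRing A]
    (s : ℕ) (hs : 2 ≤ s)
    (y₁ : A) (hy₁ : y₁ ∈ maximalIdeal A)
    (hpow : ∀ j, 2 ≤ j → j ≤ s → (maximalIdeal A) ^ j = Ideal.span {y₁ ^ j})
    (hsoc : y₁ ^ s ≠ 0) (htop : (maximalIdeal A) ^ (s + 1) = ⊥) :
    Submodule.colon ⊥ ((maximalIdeal A : Ideal A) : Set A) ⊓ (maximalIdeal A) ^ 2 = (maximalIdeal A) ^ s := by
  apply le_antisymm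
  · rintro x ⟨hx1, hx2⟩
    -- show x ∈ m^j for all 2 ≤ j ≤ s by induction
    have key : ∀ j, 2 ≤ j → j ≤ s → x ∈ (maximalIdeal A) ^ j := by
      intro j
      induction j with
      | zero => omega
      | succ n ih =>
        intro h2 hle
        rcases Nat.lt_or_ge n 2 with hn | hn
        · have hn2 : n + 1 = 2 := by omega
          rw [hn2]; exact hx2
        · have hmem : x ∈ (maximalIdeal A) ^ n := ih hn (by omega)
          rw [hpow n hn (by omega), Ideal.mem_span_singleton] at hmem
          obtain ⟨a, ha⟩ := hmem
          by_cases hu : a ∈ maximalIdeal A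
          · have : x ∈ (maximalIdeal A) ^ n * maximalIdeal A := by
              rw [ha]
              exact Ideal.mul_mem_mul (by
                rw [hpow n hn (by omega)]
                exact Ideal.mem_span_singleton_self _) hu
            rwa [← pow_succ] at this
          · exfalso
            have hau : IsUnit a := by
              by_contra h
              exact hu ((IsLocalRing.mem_maximalIdeal a).mpr h)
            have hxy : x * y₁ = 0 := by
              have := Submodule.mem_colon.mp hx1 y₁ hy₁
              simpa using this
            have : y₁ ^ (n + 1) * a = 0 := by
              calc y₁ ^ (n + 1) * a = (y₁ ^ n * a) * y₁ := by ring
              _ = x * y₁ := by rw [ha]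
              _ = 0 := hxy
            have hpn : y₁ ^ (n + 1) = 0 := by
              obtain ⟨u, hu'⟩ := hau
              have := congrArg (· * (↑u⁻¹ : A)) this
              simp only [zero_mul, mul_assoc] at this
              rw [← hu'] at this
              simpa [Units.mul_inv_cancel_right] using this
            apply hsoc
            have : y₁ ^ s = y₁ ^ (n + 1) * y₁ ^ (s - (n + 1)) := by
              rw [← pow_add]
              congr 1
              omega
            rw [this, hpn, zero_mul]
    exact key s hs le_rfl
  · intro x hx
    constructor
    · rw [SetLike.mem_coe, Submodule.mem_colon]
      intro p hp
      have : x * p ∈ (maximalIdeal A) ^ s * maximalIdeal A := Ideal.mul_mem_mul hx hp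
      rw [← pow_succ, htop] at this
      simpa using this
    · exact Ideal.pow_le_pow_right hs hx
end

section
/- Let (A, m) be a stretched Artinian local ring of socle degree s with m^j = (y₁^j) for 2 ≤ j ≤ s, and let y₂, …, y_τ ∈ m be elements such that {y₁^s, y₂, …, y_τ} is a k-basis of the socle (0 : m). Then y₁, y₂, …, y_τ are part of a minimal generating set of m, i.e., their images in m/m² are linearly independent over k = A/m. -/
open IsLocalRing

/-- Let `(A,m)` be a stretched Artinian local ring of socle degree
`s ≥ 2` with `m^j = (y₁^j)` for `2 ≤ j ≤ s`, and let `y 1 = y₁, y 2, …, y τ ∈ m`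
be such that `{y₁^s, y 2, …, y τ}` is a `k`-basis of the socle `(0 : m)`.
Then `y 1, …, y τ` are part of a minimal generating set of `m`, i.e. whenever a
linear combination `Σ λ_i y_i` lies in `m²` all coefficients `λ_i` lie in `m`. -/
theorem stretched_part_of_minimal_basis
    (A : Type*) [CommRing A] [IsLocalRing A] [IsArtinianRing A]
    (s : ℕ) (hs : 2 ≤ s)
    (τ : ℕ) (hτ : 1 ≤ τ)
    (y : ℕ → A) (hy : ∀ i, 1 ≤ i → i ≤ τ → y i ∈ maximalIdeal A)
    (hpow : ∀ j, 2 ≤ j → j ≤ s → (maximalIdeal A) ^ j = Ideal.span {(y 1) ^ j})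
    (hsoc : (y 1) ^ s ≠ 0) (htop : (maximalIdeal A) ^ (s + 1) = ⊥)
    -- `{y₁^s, y 2, …, y τ}` generates the socle …
    (hgen : Submodule.colon ⊥ ((maximalIdeal A : Ideal A) : Set A) =
      Ideal.span (insert ((y 1) ^ s) ((fun i => y i) '' Set.Icc 2 τ)))
    -- … and is `k`-linearly independent: a relation forces all coefficients into `m`
    (hindep : ∀ c : ℕ → A,
      c 1 * (y 1) ^ s + ∑ i ∈ Finset.Icc 2 τ, c i * y i = 0 →
      ∀ i, 1 ≤ i → i ≤ τ → c i ∈ maximalIdeal A) :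
    ∀ lam : ℕ → A, (∑ i ∈ Finset.Icc 1 τ, lam i * y i) ∈ (maximalIdeal A) ^ 2 →
      ∀ i, 1 ≤ i → i ≤ τ → lam i ∈ maximalIdeal A := by
  intro lam hS i hi1 hiτ
  have hy1 : y 1 ∈ maximalIdeal A := hy 1 le_rfl hτ
  -- each `y i`, `2 ≤ i ≤ τ`, lies in the socle
  have hsocmem : ∀ i, 2 ≤ i → i ≤ τ → y i ∈ Submodule.colon ⊥ ((maximalIdeal A : Ideal A) : Set A) := by
    intro i h2 hτi
    rw [hgen]
    exact Ideal.subset_span (Set.mem_insert_iff.mpr (Or.inr ⟨i, ⟨h2, hτi⟩, rfl⟩))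
  have hann : ∀ i, 2 ≤ i → i ≤ τ → ∀ z ∈ maximalIdeal A, y i * z = 0 := by
    intro i h2 hτi z hz
    have := (Submodule.mem_colon.mp (hsocmem i h2 hτi)) z hz
    simpa [smul_eq_mul, mul_comm] using this
  have hsplit : Finset.Icc 1 τ = insert 1 (Finset.Icc 2 τ) := by
    ext j; simp only [Finset.mem_Icc, Finset.mem_insert]; omega
  have hsum : ∑ i ∈ Finset.Icc 1 τ, lam i * y i
      = lam 1 * y 1 + ∑ i ∈ Finset.Icc 2 τ, lam i * y i := by
    rw [hsplit, Finset.sum_insert (by simp)]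
  obtain ⟨t, rfl⟩ : ∃ t, s = t + 2 := ⟨s - 2, by omega⟩
  set T := ∑ i ∈ Finset.Icc 2 τ, lam i * y i with hT
  -- y₁^(t+1) ∈ m
  have hy1p : (y 1) ^ (t + 1) ∈ maximalIdeal A :=
    Ideal.pow_mem_of_mem _ hy1 _ (by omega)
  -- step 1 : lam 1 ∈ m
  have hzero : lam 1 * (y 1) ^ (t + 2) = 0 := by
    have h1 : (∑ i ∈ Finset.Icc 1 τ, lam i * y i) * (y 1) ^ (t + 1) ∈
        (maximalIdeal A) ^ (t + 2 + 1) := by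
      have he : (maximalIdeal A) ^ (t + 2 + 1)
          = (maximalIdeal A) ^ 2 * (maximalIdeal A) ^ (t + 1) := by ring
      rw [he]
      exact Ideal.mul_mem_mul hS (Ideal.pow_mem_pow hy1 _)
    rw [htop, Submodule.mem_bot] at h1
    have hTz : T * (y 1) ^ (t + 1) = 0 := by
      rw [hT, Finset.sum_mul]
      apply Finset.sum_eq_zero
      intro j hj
      rw [Finset.mem_Icc] at hj
      rw [mul_assoc, hann j hj.1 hj.2 _ hy1p, mul_zero]
    have : lam 1 * (y 1) ^ (t + 2) + T * (y 1) ^ (t + 1) = 0 := by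
      rw [← h1, hsum]; ring
    rw [hTz, add_zero] at this
    exact this
  have hlam1 : lam 1 ∈ maximalIdeal A := by
    have := hindep (fun j => if j = 1 then lam 1 else 0)
      (by
        simp only [if_pos rfl]
        rw [Finset.sum_eq_zero (fun j hj => by
          rw [Finset.mem_Icc] at hj
          simp [show j ≠ 1 by omega]), add_zero]
        exact hzero) 1 le_rfl hτ
    simpa using this
  -- step 2 : T ∈ socle ∩ m²
  have hT2 : T ∈ (maximalIdeal A) ^ 2 := by
    have hTeq : T = (∑ i ∈ Finset.Icc 1 τ, lam i * y i) - lam 1 * y 1 := by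
      rw [hsum]; ring
    rw [hTeq]
    refine sub_mem hS ?_
    rw [pow_two]
    exact Ideal.mul_mem_mul hlam1 hy1
  have hTsoc : T ∈ Submodule.colon ⊥ ((maximalIdeal A : Ideal A) : Set A) := by
    apply Submodule.sum_mem
    intro j hj
    rw [Finset.mem_Icc] at hj
    exact Ideal.mul_mem_left _ _ (hsocmem j hj.1 hj.2)
  have hTy : T * y 1 = 0 := by
    have := Submodule.mem_colon.mp hTsoc (y 1) hy1
    simpa [smul_eq_mul, mul_comm] using this
  -- climbing : T ∈ m^j for all 2 ≤ j ≤ t+2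
  have climb : ∀ j, 2 ≤ j → j ≤ t + 2 → T ∈ (maximalIdeal A) ^ j := by
    intro j h2 hjs
    induction j, h2 using Nat.le_induction with
    | base => exact hT2
    | succ n hn ih =>
      have hTn : T ∈ (maximalIdeal A) ^ n := ih (by omega)
      rw [hpow n (by omega) (by omega)] at hTn
      obtain ⟨u, hu⟩ := Ideal.mem_span_singleton'.mp hTn
      by_cases hu' : u ∈ maximalIdeal A
      · rw [← hu, pow_succ']
        exact Ideal.mul_mem_mul hu' (Ideal.pow_mem_pow hy1 n)
      · exfalso
        have hunit : IsUnit u := by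
          by_contra h
          exact hu' (mem_nonunits_iff.mpr h)
        have hz : u * (y 1) ^ (n + 1) = 0 := by
          calc u * (y 1) ^ (n + 1) = (u * (y 1) ^ n) * y 1 := by ring
          _ = T * y 1 := by rw [hu]
          _ = 0 := hTy
        have hy0 : (y 1) ^ (n + 1) = 0 := by
          obtain ⟨v, rfl⟩ := hunit
          exact (Units.mul_right_eq_zero v).mp hz
        apply hsoc
        obtain ⟨d, hd⟩ : ∃ d, t + 2 = (n + 1) + d := ⟨t + 2 - (n + 1), by omega⟩
        rw [hd, pow_add, hy0, zero_mul]
  have hTs : T ∈ (maximalIdeal A) ^ (t + 2) := climb (t + 2) (by omega) le_rfl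
  rw [hpow (t + 2) (by omega) le_rfl] at hTs
  obtain ⟨c, hc⟩ := Ideal.mem_span_singleton'.mp hTs
  -- apply independence with c' 1 = -c, c' i = lam i
  have key := hindep (fun j => if j = 1 then -c else lam j)
    (by
      have hsumc : ∑ j ∈ Finset.Icc 2 τ, (if j = 1 then -c else lam j) * y j = T := by
        rw [hT]
        exact Finset.sum_congr rfl (fun j hj => by
          rw [Finset.mem_Icc] at hj
          rw [if_neg (by omega)])
      simp only [if_pos]
      rw [hsumc, ← hc]; ring)
  rcases eq_or_ne i 1 with rfl | hne
  · exact hlam1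
  · have := key i hi1 hiτ
    simpa [hne] using this
end

section
/- Let B = k[X₁, X₂] be a polynomial ring over a field, a ∈ k, Q = X₂² − a·X₁·X₂, and t ≥ 2 an integer. Then the Hilbert series of B/(Q, X₁^t·X₂) is (1 + z − z^{t+1})/(1 − z); in particular its Hilbert function is 1, 2, 2, …, 2 (in degrees 1 through t), and 1 in every degree ≥ t+1. -/
open MvPolynomial

variable (k : Type*) [Field k]

/-- The Hilbert function of `k[X₁,X₂]/K` in degree `n`:
`dim_k S_n − dim_k K_n`. -/
noncomputable def hilbFn (k : Type*) [Field k] (K : Ideal (MvPolynomial (Fin 2) k)) (n : ℕ) : ℕ :=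
  Module.finrank k (homogeneousSubmodule (Fin 2) k n) -
    Module.finrank k
      (Submodule.restrictScalars k K ⊓ homogeneousSubmodule (Fin 2) k n : Submodule k _)


namespace HilbQaux

variable {k : Type*} [Field k]

lemma deg2 (d : Fin 2 →₀ ℕ) : d.degree = d 0 + d 1 := by
  rw [Finsupp.degree, ← Fin.sum_univ_two (fun i => d i)]
  exact Finset.sum_subset (Finset.subset_univ _) (by
    intro x _ hx
    simpa using Finsupp.notMem_support_iff.mp hx)

noncomputable def mexp (n i : ℕ) : Fin 2 →₀ ℕ := Finsupp.single 0 (n - i) + Finsupp.single 1 i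

@[simp] lemma mexp0 (n i : ℕ) : mexp n i 0 = n - i := by simp [mexp, Finsupp.single_apply]
@[simp] lemma mexp1 (n i : ℕ) : mexp n i 1 = i := by simp [mexp, Finsupp.single_apply]

lemma mexp_degree {n i : ℕ} (h : i ≤ n) : (mexp n i).degree = n := by
  rw [deg2, mexp0, mexp1]; omega

lemma eq_mexp {n : ℕ} {d : Fin 2 →₀ ℕ} (h : d.degree = n) : d = mexp n (d 1) ∧ d 1 ≤ n := by
  rw [deg2] at h
  refine ⟨?_, by omega⟩
  ext i
  fin_cases i
  · simp; omega
  · simp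

lemma mexp_inj {n i j : ℕ} (h : mexp n i = mexp n j) : i = j := by
  have := congrArg (fun d => d 1) h
  simpa using this

abbrev S (k : Type*) [Field k] (n : ℕ) : Submodule k (MvPolynomial (Fin 2) k) :=
  homogeneousSubmodule (Fin 2) k n

noncomputable def degEquiv (n : ℕ) : (S k n) ≃ₗ[k] (Fin (n+1) → k) where
  toFun p i := coeff (mexp n i) (p : MvPolynomial (Fin 2) k)
  map_add' p q := by funext i; simp
  map_smul' c p := by funext i; simp
  invFun c := ⟨∑ i : Fin (n+1), monomial (mexp n i) (c i), by
    apply Submodule.sum_mem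
    intro i _
    rw [mem_homogeneousSubmodule]
    exact isHomogeneous_monomial _ (mexp_degree (by omega))⟩
  left_inv p := by
    ext d
    simp only [coeff_sum, coeff_monomial]
    by_cases hd : d.degree = n
    · obtain ⟨hd1, hd2⟩ := eq_mexp hd
      have hj : mexp n (⟨d 1, by omega⟩ : Fin (n+1)) = d := hd1.symm
      rw [Finset.sum_eq_single (⟨d 1, by omega⟩ : Fin (n+1))]
      · rw [if_pos hj, hj]
      · intro b _ hb
        rw [if_neg]
        intro hb'
        exact hb (Fin.ext (mexp_inj (hb'.trans hj.symm)))
      · intro h; exact absurd (Finset.mem_univ _) h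
    · have h0 : coeff d (p : MvPolynomial (Fin 2) k) = 0 := by
        have := (mem_homogeneousSubmodule n (p : MvPolynomial (Fin 2) k)).mp p.2
        exact this.coeff_eq_zero hd
      rw [h0, Finset.sum_eq_zero]
      intro i _
      rw [if_neg]
      intro hi
      exact hd (hi ▸ mexp_degree (by omega : (i:ℕ) ≤ n))
  right_inv c := by
    funext i
    simp only [coeff_sum, coeff_monomial]
    rw [Finset.sum_eq_single i]
    · simp
    · intro b _ hb
      rw [if_neg]
      intro hb'
      exact hb (Fin.ext (mexp_inj hb'))
    · intro h; exact absurd (Finset.mem_univ _) h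

instance (n : ℕ) : FiniteDimensional k (S k n) :=
  Module.Finite.equiv (degEquiv (k := k) n).symm

lemma finrank_S (n : ℕ) : Module.finrank k (S k n) = n + 1 := by
  rw [LinearEquiv.finrank_eq (degEquiv (k := k) n), Module.finrank_fin_fun]

lemma hc_mul {c f : MvPolynomial (Fin 2) k} {d n : ℕ} (hc : c.IsHomogeneous d) (hdn : d ≤ n) :
    homogeneousComponent n (f * c) = homogeneousComponent (n - d) f * c := by
  conv_lhs => rw [← sum_homogeneousComponent f, Finset.sum_mul, map_sum]
  have hterm : ∀ i : ℕ, homogeneousComponent n (homogeneousComponent i f * c)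
      = if i = n - d then homogeneousComponent i f * c else 0 := by
    intro i
    rw [homogeneousComponent_of_mem ((homogeneousComponent_isHomogeneous i f).mul hc)]
    congr 1
    simp only [eq_iff_iff]; omega
  simp_rw [hterm]
  rw [Finset.sum_ite_eq' (Finset.range (f.totalDegree + 1)) (n - d)
    (fun i => homogeneousComponent i f * c)]
  by_cases h : n - d ∈ Finset.range (f.totalDegree + 1)
  · rw [if_pos h]
  · rw [if_neg h, homogeneousComponent_eq_zero, zero_mul]
    simp only [Finset.mem_range] at h
    omega

lemma hc_mul_zero {c f : MvPolynomial (Fin 2) k} {d n : ℕ} (hc : c.IsHomogeneous d) (hdn : n < d) :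
    homogeneousComponent n (f * c) = 0 := by
  conv_lhs => rw [← sum_homogeneousComponent f, Finset.sum_mul, map_sum]
  apply Finset.sum_eq_zero
  intro i _
  rw [homogeneousComponent_of_mem ((homogeneousComponent_isHomogeneous i f).mul hc)]
  rw [if_neg (by omega)]

lemma self_eq_hc {n : ℕ} {x : MvPolynomial (Fin 2) k} (hx : x ∈ S k n) :
    homogeneousComponent n x = x := by
  rw [homogeneousComponent_of_mem hx, if_pos rfl]

noncomputable abbrev mulR (c : MvPolynomial (Fin 2) k) :
    MvPolynomial (Fin 2) k →ₗ[k] MvPolynomial (Fin 2) k :=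
  LinearMap.mulRight k c

lemma finrank_map_mulR {c : MvPolynomial (Fin 2) k} (hc : c ≠ 0)
    (V : Submodule k (MvPolynomial (Fin 2) k)) :
    Module.finrank k (V.map (mulR c)) = Module.finrank k V := by
  have hinj : Function.Injective (mulR c) := by
    intro x y hxy
    exact mul_left_injective₀ hc hxy
  exact (LinearEquiv.finrank_eq (Submodule.equivMapOfInjective _ hinj V)).symm

lemma primeX0 : Prime (X 0 : MvPolynomial (Fin 2) k) := by
  rw [← MulEquiv.prime_iff (MvPolynomial.finSuccEquiv k 1).toRingEquiv.toMulEquiv]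
  have : (MvPolynomial.finSuccEquiv k 1).toRingEquiv.toMulEquiv (X 0) = Polynomial.X :=
    finSuccEquiv_X_zero
  rw [this]
  exact Polynomial.prime_X

lemma Qhom (a : k) : (X 1 ^ 2 - C a * X 0 * X 1 : MvPolynomial (Fin 2) k).IsHomogeneous 2 := by
  apply MvPolynomial.IsHomogeneous.sub
  · exact (isHomogeneous_X k 1).pow 2
  · have : (C a * X 0 * X 1 : MvPolynomial (Fin 2) k).IsHomogeneous (0 + 1 + 1) :=
      ((isHomogeneous_C _ a).mul (isHomogeneous_X k 0)).mul (isHomogeneous_X k 1)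
    simpa using this

lemma aevalQ (a : k) :
    aeval (R := k) ![0, (X 1 : MvPolynomial (Fin 2) k)] (X 1 ^ 2 - C a * X 0 * X 1)
      = (X 1 : MvPolynomial (Fin 2) k) ^ 2 := by
  simp only [map_sub, map_mul, map_pow, aeval_X, aeval_C]
  simp only [Matrix.cons_val_zero, Matrix.cons_val_one, Matrix.head_cons]
  rw [mul_zero, zero_mul, sub_zero]

lemma Qne (a : k) : (X 1 ^ 2 - C a * X 0 * X 1 : MvPolynomial (Fin 2) k) ≠ 0 := by
  intro h
  have := aevalQ a
  rw [h, map_zero] at this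
  exact pow_ne_zero 2 (X_ne_zero (1 : Fin 2)) this.symm

lemma X0_not_dvd_Q (a : k) : ¬ (X 0 : MvPolynomial (Fin 2) k) ∣ (X 1 ^ 2 - C a * X 0 * X 1) := by
  intro ⟨s, hs⟩
  have := congrArg (aeval (R := k) ![0, (X 1 : MvPolynomial (Fin 2) k)]) hs
  rw [aevalQ a, map_mul, aeval_X] at this
  simp only [Matrix.cons_val_zero, zero_mul] at this
  exact pow_ne_zero 2 (X_ne_zero (1 : Fin 2)) this

lemma gne (t : ℕ) : (X 0 ^ t * X 1 : MvPolynomial (Fin 2) k) ≠ 0 :=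
  mul_ne_zero (pow_ne_zero _ (X_ne_zero 0)) (X_ne_zero 1)

lemma ghom (t : ℕ) : (X 0 ^ t * X 1 : MvPolynomial (Fin 2) k).IsHomogeneous (t + 1) := by
  simpa using ((isHomogeneous_X k 0).pow t).mul (isHomogeneous_X k 1)

lemma Xpow_hom (t : ℕ) : ((X 0 : MvPolynomial (Fin 2) k) ^ t).IsHomogeneous t := by
  simpa using (isHomogeneous_X k 0).pow t

section InfLemmas

variable {QQ gg : MvPolynomial (Fin 2) k} {dq dg n : ℕ}

lemma inf_lt (hQ : QQ.IsHomogeneous dq) (hg : gg.IsHomogeneous dg)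
    (hn1 : n < dq) (hn2 : n < dg) :
    Submodule.restrictScalars k (Ideal.span {QQ, gg}) ⊓ S k n = ⊥ := by
  rw [eq_bot_iff]
  rintro x ⟨hx1, hx2⟩
  obtain ⟨u, v, huv⟩ := Ideal.mem_span_pair.mp hx1
  have hx : x = 0 := by
    calc x = homogeneousComponent n x := (self_eq_hc hx2).symm
    _ = homogeneousComponent n (u * QQ + v * gg) := by rw [huv]
    _ = 0 := by rw [map_add, hc_mul_zero hQ hn1, hc_mul_zero hg hn2, add_zero]
  simp [hx]

lemma inf_mid (hQ : QQ.IsHomogeneous dq) (hg : gg.IsHomogeneous dg)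
    (hn1 : dq ≤ n) (hn2 : n < dg) :
    Submodule.restrictScalars k (Ideal.span {QQ, gg}) ⊓ S k n
      = (S k (n - dq)).map (mulR QQ) := by
  apply le_antisymm
  · rintro x ⟨hx1, hx2⟩
    obtain ⟨u, v, huv⟩ := Ideal.mem_span_pair.mp hx1
    have hx : x = homogeneousComponent (n - dq) u * QQ := by
      calc x = homogeneousComponent n x := (self_eq_hc hx2).symm
      _ = homogeneousComponent n (u * QQ + v * gg) := by rw [huv]
      _ = _ := by rw [map_add, hc_mul hQ hn1, hc_mul_zero hg hn2, add_zero]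
    exact ⟨homogeneousComponent (n - dq) u, homogeneousComponent_mem _ _, hx.symm⟩
  · rintro x ⟨p, hp, rfl⟩
    refine ⟨Ideal.mul_mem_left _ p (Ideal.subset_span (by simp)), ?_⟩
    show (p * QQ) ∈ S k n
    rw [mem_homogeneousSubmodule]
    have hn : n - dq + dq = n := by omega
    exact hn ▸ ((mem_homogeneousSubmodule _ _).mp hp).mul hQ

lemma inf_high (hQ : QQ.IsHomogeneous dq) (hg : gg.IsHomogeneous dg)
    (hn1 : dq ≤ n) (hn2 : dg ≤ n) :
    Submodule.restrictScalars k (Ideal.span {QQ, gg}) ⊓ S k n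
      = (S k (n - dq)).map (mulR QQ) ⊔ (S k (n - dg)).map (mulR gg) := by
  apply le_antisymm
  · rintro x ⟨hx1, hx2⟩
    obtain ⟨u, v, huv⟩ := Ideal.mem_span_pair.mp hx1
    have hx : x = homogeneousComponent (n - dq) u * QQ + homogeneousComponent (n - dg) v * gg := by
      calc x = homogeneousComponent n x := (self_eq_hc hx2).symm
      _ = homogeneousComponent n (u * QQ + v * gg) := by rw [huv]
      _ = _ := by rw [map_add, hc_mul hQ hn1, hc_mul hg hn2]
    rw [hx]
    exact Submodule.add_mem_sup
      ⟨homogeneousComponent (n - dq) u, homogeneousComponent_mem _ _, rfl⟩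
      ⟨homogeneousComponent (n - dg) v, homogeneousComponent_mem _ _, rfl⟩
  · rw [sup_le_iff]
    constructor
    · rintro x ⟨p, hp, rfl⟩
      refine ⟨Ideal.mul_mem_left _ p (Ideal.subset_span (by simp)), ?_⟩
      show (p * QQ) ∈ S k n
      rw [mem_homogeneousSubmodule]
      have hn : n - dq + dq = n := by omega
      exact hn ▸ ((mem_homogeneousSubmodule _ _).mp hp).mul hQ
    · rintro x ⟨p, hp, rfl⟩
      refine ⟨Ideal.mul_mem_left _ p (Ideal.subset_span (by simp)), ?_⟩
      show (p * gg) ∈ S k n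
      rw [mem_homogeneousSubmodule]
      have hn : n - dg + dg = n := by omega
      exact hn ▸ ((mem_homogeneousSubmodule _ _).mp hp).mul hg

end InfLemmas

lemma key_dvd (a : k) (t : ℕ) {p q : MvPolynomial (Fin 2) k}
    (h : p * (X 1 ^ 2 - C a * X 0 * X 1) = q * (X 0 ^ t * X 1)) :
    ∃ r, p = X 0 ^ t * r := by
  have hdvd : (X 0 : MvPolynomial (Fin 2) k) ^ t ∣ p * (X 1 ^ 2 - C a * X 0 * X 1) :=
    ⟨q * X 1, by rw [h]; ring⟩
  obtain ⟨r, hr⟩ := primeX0.pow_dvd_of_dvd_mul_right t (X0_not_dvd_Q a) hdvd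
  exact ⟨r, hr⟩

lemma cQhom (a : k) (t : ℕ) :
    ((X 0 ^ t * (X 1 ^ 2 - C a * X 0 * X 1)) : MvPolynomial (Fin 2) k).IsHomogeneous (t + 2) := by
  exact (Xpow_hom t).mul (Qhom a)

lemma lin_hom (a : k) : ((X 1 - C a * X 0 : MvPolynomial (Fin 2) k)).IsHomogeneous 1 := by
  apply MvPolynomial.IsHomogeneous.sub (isHomogeneous_X k 1)
  simpa using (isHomogeneous_C (Fin 2) a).mul (isHomogeneous_X k 0)

lemma VW_inf_high (a : k) {t n : ℕ} (hn : t + 2 ≤ n) :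
    ((S k (n-2)).map (mulR (X 1 ^ 2 - C a * X 0 * X 1))
      ⊓ (S k (n-t-1)).map (mulR (X 0 ^ t * X 1)))
    = (S k (n-t-2)).map (mulR (X 0 ^ t * (X 1 ^ 2 - C a * X 0 * X 1))) := by
  apply le_antisymm
  · rintro x ⟨⟨p, hp, rfl⟩, ⟨q, hq, hqx⟩⟩
    simp only [LinearMap.mulRight_apply] at hqx ⊢
    obtain ⟨r, hr⟩ := key_dvd a t (hqx.symm : p * _ = q * _)
    have hx : p * (X 1 ^ 2 - C a * X 0 * X 1)
        = r * (X 0 ^ t * (X 1 ^ 2 - C a * X 0 * X 1)) := by rw [hr]; ring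
    have hxS : p * (X 1 ^ 2 - C a * X 0 * X 1) ∈ S k n := by
      rw [mem_homogeneousSubmodule]
      have harith : n - 2 + 2 = n := by omega
      exact harith ▸ ((mem_homogeneousSubmodule _ _).mp hp).mul (Qhom a)
    refine ⟨homogeneousComponent (n - t - 2) r, homogeneousComponent_mem _ _, ?_⟩
    have : p * (X 1 ^ 2 - C a * X 0 * X 1)
        = homogeneousComponent (n - t - 2) r * (X 0 ^ t * (X 1 ^ 2 - C a * X 0 * X 1)) := by
      calc p * (X 1 ^ 2 - C a * X 0 * X 1)
          = homogeneousComponent n (p * (X 1 ^ 2 - C a * X 0 * X 1)) := (self_eq_hc hxS).symm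
        _ = homogeneousComponent n (r * (X 0 ^ t * (X 1 ^ 2 - C a * X 0 * X 1))) := by rw [← hx]
        _ = homogeneousComponent (n - (t + 2)) r * (X 0 ^ t * (X 1 ^ 2 - C a * X 0 * X 1)) :=
            hc_mul (cQhom a t) hn
        _ = _ := by rw [Nat.sub_sub]
    exact this.symm
  · rintro x ⟨r, hr, rfl⟩
    simp only [LinearMap.mulRight_apply]
    constructor
    · refine ⟨r * X 0 ^ t, ?_, ?_⟩
      · rw [SetLike.mem_coe, mem_homogeneousSubmodule]
        have harith : n - t - 2 + t = n - 2 := by omega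
        exact harith ▸ ((mem_homogeneousSubmodule _ _).mp hr).mul (Xpow_hom t)
      · simp only [LinearMap.mulRight_apply]; ring
    · refine ⟨r * (X 1 - C a * X 0), ?_, ?_⟩
      · rw [SetLike.mem_coe, mem_homogeneousSubmodule]
        have harith : n - t - 2 + 1 = n - t - 1 := by omega
        exact harith ▸ ((mem_homogeneousSubmodule _ _).mp hr).mul (lin_hom a)
      · simp only [LinearMap.mulRight_apply]; ring

lemma VW_inf_tp1 (a : k) {t n : ℕ} (ht : 2 ≤ t) (hn : n = t + 1) :
    ((S k (n-2)).map (mulR (X 1 ^ 2 - C a * X 0 * X 1))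
      ⊓ (S k (n-t-1)).map (mulR (X 0 ^ t * X 1))) = ⊥ := by
  rw [eq_bot_iff]
  rintro x ⟨⟨p, hp, rfl⟩, ⟨q, hq, hqx⟩⟩
  simp only [LinearMap.mulRight_apply] at hqx ⊢
  obtain ⟨r, hr⟩ := key_dvd a t (hqx.symm : p * _ = q * _)
  have hx : p * (X 1 ^ 2 - C a * X 0 * X 1)
      = r * (X 0 ^ t * (X 1 ^ 2 - C a * X 0 * X 1)) := by rw [hr]; ring
  have hxS : p * (X 1 ^ 2 - C a * X 0 * X 1) ∈ S k n := by
    rw [mem_homogeneousSubmodule]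
    have harith : n - 2 + 2 = n := by omega
    exact harith ▸ ((mem_homogeneousSubmodule _ _).mp hp).mul (Qhom a)
  have hz : p * (X 1 ^ 2 - C a * X 0 * X 1) = 0 := by
    calc p * (X 1 ^ 2 - C a * X 0 * X 1)
        = homogeneousComponent n (p * (X 1 ^ 2 - C a * X 0 * X 1)) := (self_eq_hc hxS).symm
      _ = homogeneousComponent n (r * (X 0 ^ t * (X 1 ^ 2 - C a * X 0 * X 1))) := by rw [← hx]
      _ = 0 := hc_mul_zero (cQhom a t) (by omega)
  simp [hz]

end HilbQaux

namespace HilbQaux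

variable {k : Type*} [Field k]

lemma hilb_lt2 (a : k) {t n : ℕ} (ht : 2 ≤ t) (hn : n < 2) :
    hilbFn k (Ideal.span {X 1 ^ 2 - C a * X 0 * X 1, X 0 ^ t * X 1}) n = n + 1 := by
  unfold hilbFn
  rw [inf_lt (Qhom a) (ghom t) hn (by omega), finrank_S]
  simp

lemma hilb_mid (a : k) {t n : ℕ} (ht : 2 ≤ t) (hn1 : 2 ≤ n) (hn2 : n ≤ t) :
    hilbFn k (Ideal.span {X 1 ^ 2 - C a * X 0 * X 1, X 0 ^ t * X 1}) n = 2 := by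
  unfold hilbFn
  rw [inf_mid (Qhom a) (ghom t) hn1 (by omega), finrank_map_mulR (Qne a), finrank_S, finrank_S]
  omega

lemma hilb_tp1 (a : k) {t n : ℕ} (ht : 2 ≤ t) (hn : n = t + 1) :
    hilbFn k (Ideal.span {X 1 ^ 2 - C a * X 0 * X 1, X 0 ^ t * X 1}) n = 1 := by
  unfold hilbFn
  rw [inf_high (Qhom a) (ghom t) (by omega) (by omega)]
  rw [show n - (t + 1) = n - t - 1 from by omega]
  have hsum := Submodule.finrank_sup_add_finrank_inf_eq
    ((S k (n-2)).map (mulR (X 1 ^ 2 - C a * X 0 * X 1)))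
    ((S k (n-t-1)).map (mulR (X 0 ^ t * X 1)))
  rw [VW_inf_tp1 a ht hn, finrank_bot,
    finrank_map_mulR (Qne a), finrank_map_mulR (gne t), finrank_S, finrank_S] at hsum
  rw [finrank_S]
  omega

lemma hilb_high (a : k) {t n : ℕ} (ht : 2 ≤ t) (hn : t + 2 ≤ n) :
    hilbFn k (Ideal.span {X 1 ^ 2 - C a * X 0 * X 1, X 0 ^ t * X 1}) n = 1 := by
  unfold hilbFn
  rw [inf_high (Qhom a) (ghom t) (by omega) (by omega)]
  rw [show n - (t + 1) = n - t - 1 from by omega]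
  have hsum := Submodule.finrank_sup_add_finrank_inf_eq
    ((S k (n-2)).map (mulR (X 1 ^ 2 - C a * X 0 * X 1)))
    ((S k (n-t-1)).map (mulR (X 0 ^ t * X 1)))
  rw [VW_inf_high a hn,
    finrank_map_mulR (mul_ne_zero (pow_ne_zero _ (X_ne_zero 0)) (Qne a)),
    finrank_map_mulR (Qne a), finrank_map_mulR (gne t), finrank_S, finrank_S, finrank_S] at hsum
  rw [finrank_S]
  omega

end HilbQaux

/-- For `B = k[X₁,X₂]`, `a ∈ k`, `Q = X₂² − aX₁X₂` and `t ≥ 2`,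
the Hilbert series of `B/(Q, X₁^t X₂)` is `(1+z−z^{t+1})/(1−z)`; in particular the
Hilbert function is `1, 2, 2, …, 2` (degrees `1` through `t`) and `1` in all
degrees `≥ t+1`. -/
theorem hilbert_function_Q_case
    (a : k) (t : ℕ) (ht : 2 ≤ t)
    (Q : MvPolynomial (Fin 2) k) (hQ : Q = X 1 ^ 2 - C a * X 0 * X 1)
    (K : Ideal (MvPolynomial (Fin 2) k)) (hK : K = Ideal.span {Q, X 0 ^ t * X 1}) :
    ((1 - PowerSeries.X) * PowerSeries.mk (fun n => (hilbFn k K n : ℤ))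
        = 1 + PowerSeries.X - PowerSeries.X ^ (t + 1)) ∧
      hilbFn k K 0 = 1 ∧
      (∀ j, 1 ≤ j → j ≤ t → hilbFn k K j = 2) ∧
      (∀ j, t + 1 ≤ j → hilbFn k K j = 1) := by
  subst hQ
  subst hK
  have h0 : hilbFn k (Ideal.span {X 1 ^ 2 - C a * X 0 * X 1, X 0 ^ t * X 1}) 0 = 1 := by
    simpa using HilbQaux.hilb_lt2 a ht (by omega)
  have h1 : ∀ j, 1 ≤ j → j ≤ t →
      hilbFn k (Ideal.span {X 1 ^ 2 - C a * X 0 * X 1, X 0 ^ t * X 1}) j = 2 := by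
    intro j hj1 hj2
    rcases Nat.lt_or_ge j 2 with h | h
    · have hj : j = 1 := by omega
      subst hj
      simpa using HilbQaux.hilb_lt2 a ht (by omega)
    · exact HilbQaux.hilb_mid a ht h hj2
  have h2 : ∀ j, t + 1 ≤ j →
      hilbFn k (Ideal.span {X 1 ^ 2 - C a * X 0 * X 1, X 0 ^ t * X 1}) j = 1 := by
    intro j hj
    rcases eq_or_lt_of_le hj with h | h
    · exact HilbQaux.hilb_tp1 a ht h.symm
    · exact HilbQaux.hilb_high a ht (by omega)
  refine ⟨?_, h0, h1, h2⟩
  ext n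
  rw [sub_mul, one_mul, map_sub, map_sub, map_add]
  obtain _ | m := n
  · rw [PowerSeries.coeff_zero_X_mul]
    simp [h0, PowerSeries.coeff_X_pow]
  · rw [PowerSeries.coeff_succ_X_mul, PowerSeries.coeff_mk, PowerSeries.coeff_mk,
      PowerSeries.coeff_one, PowerSeries.coeff_X, PowerSeries.coeff_X_pow]
    rcases Nat.lt_or_ge m 1 with hm | hm
    · have : m = 0 := by omega
      subst this
      rw [h0, h1 1 le_rfl (by omega)]
      have ht1 : (1 : ℕ) ≠ t + 1 := by omega
      simp [ht1, show t ≠ 0 by omega]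
    · rcases Nat.lt_or_ge (m + 1) (t + 1) with hm2 | hm2
      · rw [h1 (m+1) (by omega) (by omega), h1 m (by omega) (by omega)]
        have h3 : (m + 1 : ℕ) ≠ 0 := by omega
        have h4 : (m + 1 : ℕ) ≠ 1 := by omega
        have h5 : (m + 1 : ℕ) ≠ t + 1 := by omega
        simp [h3, h4, h5, show m ≠ 0 by omega, show m ≠ t by omega]
      · rcases eq_or_lt_of_le hm2 with he | hgt
        · rw [h2 (m+1) (by omega), h1 m (by omega) (by omega)]
          have h4 : (m + 1 : ℕ) ≠ 1 := by omega
          have ht0 : t ≠ 0 := by omega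
          simp [h4, ← he, ht0]
        · rw [h2 (m+1) (by omega), h2 m (by omega)]
          have h4 : (m + 1 : ℕ) ≠ 1 := by omega
          have h5 : (m + 1 : ℕ) ≠ t + 1 := by omega
          simp [h4, h5, show m ≠ 0 by omega, show m ≠ t by omega]
end

section
/- Let B be a commutative ring, n = (x₁, …, x_h) an ideal with h ≥ 2, and integers t ≥ 2, s ≥ t+1. Let J be the ideal generated by {x₁x_j : 3 ≤ j ≤ h}, {x_i x_j : 2 ≤ i < j ≤ h}, {x_j² − u_j x₁^s : 3 ≤ j ≤ h}, x₂² − a x₁ x₂ − w x₁^{s−t+1}, and x₁^t x₂, where a, u₃, …, u_h ∈ B and w is a unit in B. Then n^{s+1} ⊆ J. -/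
private lemma memK {B : Type*} [CommRing B] (J : Ideal B) (g₁ g₂ jb c₁ c₂ e : B)
    (hjb : jb ∈ J) (he : e = jb + c₁ * g₁ + c₂ * g₂) :
    e ∈ J ⊔ Ideal.span {g₁, g₂} := by
  subst he
  exact add_mem
    (add_mem (Ideal.mem_sup_left hjb)
      (Ideal.mem_sup_right (Ideal.mul_mem_left _ _ (Ideal.subset_span (Set.mem_insert _ _)))))
    (Ideal.mem_sup_right (Ideal.mul_mem_left _ _
      (Ideal.subset_span (Set.mem_insert_of_mem _ rfl))))

/-- Let `B` be a commutative ring, `n = (x₁,…,x_h)` with `h ≥ 2`,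
`t ≥ 2`, `s ≥ t+1`, and let `J` be generated by `{x₁x_j}_{3≤j≤h}`,
`{x_i x_j}_{2≤i<j≤h}`, `{x_j² − u_j x₁^s}_{3≤j≤h}`, `x₂² − a x₁ x₂ − w x₁^{s−t+1}`
and `x₁^t x₂`, where `w` is a unit.  Then `n^{s+1} ⊆ J`. -/
theorem power_in_ideal
    (B : Type*) [CommRing B] (h t s : ℕ) (hh : 2 ≤ h) (ht : 2 ≤ t) (hs : t + 1 ≤ s)
    (x u : ℕ → B) (a w : B) (hw : IsUnit w)
    (n J : Ideal B)
    (hn : n = Ideal.span ((fun i => x i) '' Set.Icc 1 h))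
    (hJ : J = Ideal.span
      ({p | ∃ j, 3 ≤ j ∧ j ≤ h ∧ p = x 1 * x j} ∪
       {p | ∃ i j, 2 ≤ i ∧ i < j ∧ j ≤ h ∧ p = x i * x j} ∪
       {p | ∃ j, 3 ≤ j ∧ j ≤ h ∧ p = x j ^ 2 - u j * x 1 ^ s} ∪
       {x 2 ^ 2 - a * x 1 * x 2 - w * x 1 ^ (s - t + 1)} ∪
       {x 1 ^ t * x 2})) :
    n ^ (s + 1) ≤ J := by
  obtain ⟨t', rfl⟩ : ∃ t', t = t' + 2 := ⟨t - 2, by omega⟩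
  obtain ⟨d, rfl⟩ : ∃ d, s = t' + 2 + 1 + d := ⟨s - (t' + 2 + 1), by omega⟩
  rw [show t' + 2 + 1 + d - (t' + 2) + 1 = d + 2 from by omega] at hJ
  -- basic membership facts
  have hJ1 : ∀ j, 3 ≤ j → j ≤ h → x 1 * x j ∈ J := by
    intro j h3 hjh
    rw [hJ]
    exact Ideal.subset_span (Or.inl (Or.inl (Or.inl (Or.inl ⟨j, h3, hjh, rfl⟩))))
  have hJ2 : ∀ i j, 2 ≤ i → i < j → j ≤ h → x i * x j ∈ J := by
    intro i j h2 hij hjh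
    rw [hJ]
    exact Ideal.subset_span (Or.inl (Or.inl (Or.inl (Or.inr ⟨i, j, h2, hij, hjh, rfl⟩))))
  have hJ3 : ∀ j, 3 ≤ j → j ≤ h → x j ^ 2 - u j * x 1 ^ (t' + 2 + 1 + d) ∈ J := by
    intro j h3 hjh
    rw [hJ]
    exact Ideal.subset_span (Or.inl (Or.inl (Or.inr ⟨j, h3, hjh, rfl⟩)))
  have hJ4 : x 2 ^ 2 - a * x 1 * x 2 - w * x 1 ^ (d + 2) ∈ J := by
    rw [hJ]
    exact Ideal.subset_span (Or.inl (Or.inr rfl))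
  have hJ5 : x 1 ^ (t' + 2) * x 2 ∈ J := by
    rw [hJ]
    exact Ideal.subset_span (Or.inr rfl)
  -- the key induction
  have key : ∀ m : ℕ, n ^ (m + 2) ≤ J ⊔ Ideal.span {x 1 ^ (m + 2), x 1 ^ (m + 1) * x 2} := by
    intro m
    induction m with
    | zero =>
      have base : ∀ i j : ℕ, 1 ≤ i → j ≤ h → i ≤ j →
          x i * x j ∈ J ⊔ Ideal.span {x 1 ^ (0 + 2), x 1 ^ (0 + 1) * x 2} := by
        intro i j hi1 hjh hij
        by_cases hi : i = 1
        · subst hi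
          by_cases hj : j = 1
          · subst hj
            exact memK J _ _ 0 1 0 _ (zero_mem J) (by ring)
          · by_cases hj2 : j = 2
            · subst hj2
              exact memK J _ _ 0 0 1 _ (zero_mem J) (by ring)
            · exact Ideal.mem_sup_left (hJ1 j (by omega) hjh)
        · by_cases hi2 : i = 2
          · subst hi2
            by_cases hj2 : j = 2
            · subst hj2
              refine memK J _ _ (x 2 ^ 2 - a * x 1 * x 2 - w * x 1 ^ (d + 2))
                (w * x 1 ^ d) a _ hJ4 (by ring)
            · exact Ideal.mem_sup_left (hJ2 2 j le_rfl (by omega) hjh)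
          · -- 3 ≤ i
            have h3 : 3 ≤ i := by omega
            by_cases hji : j = i
            · subst hji
              refine memK J _ _ (x j ^ 2 - u j * x 1 ^ (t' + 2 + 1 + d))
                (u j * x 1 ^ (t' + 1 + d)) 0 _ (hJ3 j h3 hjh) (by ring)
            · exact Ideal.mem_sup_left (hJ2 i j (by omega) (by omega) hjh)
      rw [hn, show (0:ℕ) + 2 = 2 from rfl, pow_two, Ideal.span_mul_span']
      rw [Ideal.span_le]
      intro z hz
      rw [Set.mem_mul] at hz
      obtain ⟨p, hp, q, hq, rfl⟩ := hz
      obtain ⟨i, hi, rfl⟩ := hp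
      obtain ⟨j, hj, rfl⟩ := hq
      rw [Set.mem_Icc] at hi hj
      rcases le_total i j with hle | hle
      · exact base i j hi.1 hj.2 hle
      · have hb := base j i hj.1 hi.2 hle
        rwa [mul_comm (x j) (x i)] at hb
    | succ m ih =>
      have hstep : Ideal.span {x 1 ^ (m + 2), x 1 ^ (m + 1) * x 2} * n ≤
          J ⊔ Ideal.span {x 1 ^ (m + 1 + 2), x 1 ^ (m + 1 + 1) * x 2} := by
        rw [hn, Ideal.span_mul_span', Ideal.span_le]
        intro z hz
        rw [Set.mem_mul] at hz
        obtain ⟨g, hg, q, hq, rfl⟩ := hz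
        obtain ⟨i, hi, rfl⟩ := hq
        rw [Set.mem_Icc] at hi
        simp only [Set.mem_insert_iff, Set.mem_singleton_iff] at hg
        rcases hg with rfl | rfl
        · -- g = x1^(m+2)
          by_cases hi1 : i = 1
          · subst hi1
            exact memK J _ _ 0 1 0 _ (zero_mem J) (by ring)
          · by_cases hi2 : i = 2
            · subst hi2
              exact memK J _ _ 0 0 1 _ (zero_mem J) (by ring)
            · refine Ideal.mem_sup_left ?_
              have := Ideal.mul_mem_left J (x 1 ^ (m + 1)) (hJ1 i (by omega) hi.2)
              have heq : x 1 ^ (m + 1) * (x 1 * x i) = x 1 ^ (m + 2) * x i := by ring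
              rwa [heq] at this
        · -- g = x1^(m+1) * x2
          by_cases hi1 : i = 1
          · subst hi1
            exact memK J _ _ 0 0 1 _ (zero_mem J) (by ring)
          · by_cases hi2 : i = 2
            · subst hi2
              refine memK J _ _
                (x 1 ^ (m + 1) * (x 2 ^ 2 - a * x 1 * x 2 - w * x 1 ^ (d + 2)))
                (w * x 1 ^ d) a _ (Ideal.mul_mem_left J _ hJ4) (by ring)
            · refine Ideal.mem_sup_left ?_
              have := Ideal.mul_mem_left J (x 1 ^ (m + 1)) (hJ2 2 i le_rfl (by omega) hi.2)
              have heq : x 1 ^ (m + 1) * (x 2 * x i) = x 1 ^ (m + 1) * x 2 * x i := by ring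
              rwa [heq] at this
      calc n ^ (m + 1 + 2) = n ^ (m + 2) * n := by rw [← pow_succ]
        _ ≤ (J ⊔ Ideal.span {x 1 ^ (m + 2), x 1 ^ (m + 1) * x 2}) * n :=
            Ideal.mul_mono_left ih
        _ = J * n ⊔ Ideal.span {x 1 ^ (m + 2), x 1 ^ (m + 1) * x 2} * n :=
            Ideal.sup_mul _ _ _
        _ ≤ J ⊔ Ideal.span {x 1 ^ (m + 1 + 2), x 1 ^ (m + 1 + 1) * x 2} :=
            sup_le (le_trans Ideal.mul_le_left le_sup_left) hstep
  -- conclude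
  have h1 : x 1 ^ (t' + d + 2 + 2) ∈ J := by
    obtain ⟨ω, rfl⟩ := hw
    have hmem : (ω : B) * x 1 ^ (t' + d + 2 + 2) ∈ J := by
      have e1 := Ideal.mul_mem_left J (x 2) hJ5
      have e2 := Ideal.mul_mem_left J (a * x 1) hJ5
      have e3 := Ideal.mul_mem_left J (x 1 ^ (t' + 2)) hJ4
      have heq : (ω : B) * x 1 ^ (t' + d + 2 + 2) =
          x 2 * (x 1 ^ (t' + 2) * x 2) - a * x 1 * (x 1 ^ (t' + 2) * x 2) -
          x 1 ^ (t' + 2) * (x 2 ^ 2 - a * x 1 * x 2 - ↑ω * x 1 ^ (d + 2)) := by ring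
      rw [heq]
      exact sub_mem (sub_mem e1 e2) e3
    have := Ideal.mul_mem_left J ((ω⁻¹ : Bˣ) : B) hmem
    rwa [← mul_assoc, Units.inv_mul, one_mul] at this
  have h2 : x 1 ^ (t' + d + 2 + 1) * x 2 ∈ J := by
    have := Ideal.mul_mem_left J (x 1 ^ (d + 1)) hJ5
    have heq : x 1 ^ (d + 1) * (x 1 ^ (t' + 2) * x 2) = x 1 ^ (t' + d + 2 + 1) * x 2 := by ring
    rwa [heq] at this
  have hfin : J ⊔ Ideal.span {x 1 ^ (t' + d + 2 + 2), x 1 ^ (t' + d + 2 + 1) * x 2} ≤ J := by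
    refine sup_le le_rfl ?_
    rw [Ideal.span_le]
    intro z hz
    simp only [Set.mem_insert_iff, Set.mem_singleton_iff] at hz
    rcases hz with rfl | rfl
    · exact h1
    · exact h2
  rw [show t' + 2 + 1 + d + 1 = t' + d + 2 + 2 from by omega]
  exact le_trans (key (t' + d + 2)) hfin
end

section
/- Let T be a two-dimensional regular local ring with maximal ideal n = (x₁, x₂), let t ≥ 2, s ≥ t+1, a ∈ T, w a unit of T, and q = x₂² − a x₁ x₂ − w x₁^{s−t+1}. Then x₁^s ∉ (x₁^t x₂, q) + n^{s+1}. -/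
open IsLocalRing

namespace KeyAux

universe v

variable {R : Type*} [CommRing R]

/-- every element of `(span{x,y})^k` can be written `c*y^k + x*r` with `r ∈ (span{x,y})^(k-1)`. -/
lemma pow_span_pair_decomp (x y : R) :
    ∀ (k : ℕ) (z : R), z ∈ (Ideal.span {x, y}) ^ k →
      ∃ c r, z = c * y ^ k + x * r ∧ r ∈ (Ideal.span {x, y}) ^ (k - 1) := by
  intro k
  induction k with
  | zero => intro z hz; exact ⟨z, 0, by ring, by simp⟩
  | succ k ih =>
    intro z hz
    rw [pow_succ] at hz
    have key : ∀ w ∈ (Ideal.span {x, y}) ^ k * Ideal.span {x, y},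
        ∃ c r, w = c * y ^ (k+1) + x * r ∧ r ∈ (Ideal.span {x, y}) ^ k := by
      intro w hw
      refine Submodule.mul_induction_on hw ?_ ?_
      · intro p hp qe hqe
        obtain ⟨c₀, r₀, rfl, hr₀⟩ := ih p hp
        obtain ⟨a', b', hab⟩ := Ideal.mem_span_pair.mp hqe
        refine ⟨c₀ * b', a' * (c₀ * y ^ k + x * r₀) + b' * (y * r₀), by rw [← hab]; ring, ?_⟩
        refine add_mem (Ideal.mul_mem_left _ _ hp) ?_
        cases k with
        | zero => simp
        | succ k' =>
          refine Ideal.mul_mem_left _ _ ?_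
          rw [pow_succ']
          refine Ideal.mul_mem_mul (by exact Ideal.subset_span (by simp)) ?_
          simpa using hr₀
      · rintro w₁ w₂ ⟨c₁, r₁, rfl, hr₁⟩ ⟨c₂, r₂, rfl, hr₂⟩
        exact ⟨c₁ + c₂, r₁ + r₂, by ring, add_mem hr₁ hr₂⟩
    obtain ⟨c, r, h1, h2⟩ := key z hz
    exact ⟨c, r, h1, by simpa using h2⟩

lemma mem_pow_of_monomial (x y : R) (i j : ℕ) (c : R) :
    c * (x ^ i * y ^ j) ∈ (Ideal.span {x, y} : Ideal R) ^ (i + j) := by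
  refine Ideal.mul_mem_left _ _ ?_
  rw [pow_add]
  exact Ideal.mul_mem_mul
    (Ideal.pow_mem_pow (Ideal.subset_span (by simp)) _)
    (Ideal.pow_mem_pow (Ideal.subset_span (by simp)) _)

/-- iterated regularity -/
lemma reg_iter (x y : R) (hreg : ∀ z, z * y ∈ Ideal.span {x} → z ∈ Ideal.span {x}) :
    ∀ (k : ℕ) (z : R), z * y ^ k ∈ Ideal.span {x} → z ∈ Ideal.span {x} := by
  intro k
  induction k with
  | zero => intro z hz; simpa using hz
  | succ k ih =>
    intro z hz
    refine hreg z (ih (z * y) ?_)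
    have : z * y * y ^ k = z * y ^ (k+1) := by ring
    rw [this]; exact hz

/-- maximal ideal of a quotient of a local ring -/
lemma quot_maximalIdeal [IsLocalRing R] (I : Ideal R) (hI : I ≤ maximalIdeal R)
    [Nontrivial (R ⧸ I)] [IsLocalRing (R ⧸ I)] :
    maximalIdeal (R ⧸ I) = Ideal.map (Ideal.Quotient.mk I) (maximalIdeal R) := by
  ext z
  constructor
  · intro hz
    obtain ⟨r, rfl⟩ := Ideal.Quotient.mk_surjective z
    have hr : r ∈ maximalIdeal R := by
      by_contra hru
      have : IsUnit r := by
        by_contra h'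
        exact hru (IsLocalRing.mem_maximalIdeal r |>.mpr h')
      have : IsUnit (Ideal.Quotient.mk I r) := this.map _
      exact (IsLocalRing.mem_maximalIdeal _ |>.mp hz) this
    exact Ideal.mem_map_of_mem _ hr
  · intro hz
    obtain ⟨r, hr, rfl⟩ := Ideal.mem_map_iff_of_surjective _ Ideal.Quotient.mk_surjective |>.mp hz
    refine IsLocalRing.mem_maximalIdeal _ |>.mpr ?_
    rintro ⟨u, hu⟩
    obtain ⟨v, hv⟩ := Ideal.Quotient.mk_surjective (↑u⁻¹ : R ⧸ I)
    have h1 : Ideal.Quotient.mk I (r * v) = 1 := by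
      rw [map_mul, hv, ← hu]
      exact u.mul_inv
    have h2 : r * v - 1 ∈ I := by
      rw [← Ideal.Quotient.eq_zero_iff_mem, map_sub, h1, map_one, sub_self]
    have h3 : (1 : R) ∈ maximalIdeal R := by
      have : r * v ∈ maximalIdeal R := Ideal.mul_mem_right _ _ hr
      have := sub_mem this (hI h2)
      simpa using this
    exact (IsLocalRing.maximalIdeal.isMaximal R).ne_top (Ideal.eq_top_iff_one _ |>.mpr h3)

/-- In a Noetherian local ring with principal maximal ideal, the generator is either
nilpotent or a nonzerodivisor. -/
lemma principal_dichotomy {S : Type*} [CommRing S] [IsLocalRing S] [IsNoetherianRing S]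
    (pi : S) (hmaxS : maximalIdeal S = Ideal.span {pi}) :
    (∃ k : ℕ, pi ^ k = 0) ∨ (∀ v : S, v * pi = 0 → v = 0) := by
  by_cases hex : ∃ v : S, v ≠ 0 ∧ v * pi = 0
  · left
    obtain ⟨v, hv0, hvpi⟩ := hex
    have hKrull : (⨅ k : ℕ, (maximalIdeal S) ^ k) = ⊥ :=
      Ideal.iInf_pow_eq_bot_of_isLocalRing _ (IsLocalRing.maximalIdeal.isMaximal _).ne_top
    have hnotall : ∃ k, v ∉ (maximalIdeal S) ^ k := by
      by_contra hall
      push_neg at hall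
      have hv : v ∈ (⊥ : Ideal S) := by
        rw [← hKrull]
        exact Ideal.mem_iInf.mpr hall
      exact hv0 (Ideal.mem_bot.mp hv)
    have hbdry : ∃ k', v ∈ (maximalIdeal S) ^ k' ∧ v ∉ (maximalIdeal S) ^ (k' + 1) := by
      obtain ⟨k, hk⟩ := hnotall
      induction k with
      | zero => exact absurd (by simp) hk
      | succ k ih =>
        by_cases hvk : v ∈ (maximalIdeal S) ^ k
        · exact ⟨k, hvk, hk⟩
        · exact ih hvk
    obtain ⟨k', hmem, hmin⟩ := hbdry
    rw [hmaxS, Ideal.span_singleton_pow, Ideal.mem_span_singleton'] at hmem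
    obtain ⟨u, hu⟩ := hmem
    have hunotmem : u ∉ maximalIdeal S := by
      intro humem
      have humem' : u ∈ Ideal.span {pi} := by rw [← hmaxS]; exact humem
      refine hmin ?_
      have h3 : v = pi ^ k' * u := by rw [← hu]; ring
      rw [h3, hmaxS, pow_succ]
      exact Ideal.mul_mem_mul
        (Ideal.pow_mem_pow (Ideal.subset_span (Set.mem_singleton pi)) _) humem'
    have huu : IsUnit u := by
      by_contra h'
      exact hunotmem (IsLocalRing.mem_maximalIdeal u |>.mpr h')
    refine ⟨k' + 1, ?_⟩
    have h0 : u * pi ^ (k' + 1) = 0 := by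
      have h4 : u * pi ^ (k' + 1) = (u * pi ^ k') * pi := by ring
      rw [h4, hu, hvpi]
    obtain ⟨uu, huu'⟩ := huu
    have h5 := congrArg (fun z => (↑uu⁻¹ : S) * z) h0
    simp only [← huu', ← mul_assoc, Units.inv_mul, one_mul, mul_zero] at h5
    exact h5
  · right
    push_neg at hex
    intro v hv
    by_cases h0 : v = 0
    · exact h0
    · exact absurd hv (hex v h0)

/-- Dichotomy in `R/(x)` for a Noetherian local ring with maximal ideal `(x,y)`. -/
lemma dichotomy [IsLocalRing R] [IsNoetherianRing R] (x y : R)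
    (hmax : maximalIdeal R = Ideal.span {x, y}) :
    (∃ k : ℕ, y ^ k ∈ Ideal.span {x}) ∨
      (∀ z, z * y ∈ Ideal.span {x} → z ∈ Ideal.span {x}) := by
  by_cases h1 : (1 : R) ∈ Ideal.span {x}
  · left
    exact ⟨1, by simpa using Ideal.mul_mem_left _ y h1⟩
  have hInetop : (Ideal.span {x} : Ideal R) ≠ ⊤ := fun h => h1 (h ▸ Submodule.mem_top)
  haveI : Nontrivial (R ⧸ (Ideal.span {x} : Ideal R)) := Ideal.Quotient.nontrivial_iff.mpr hInetop
  haveI : IsLocalRing (R ⧸ (Ideal.span {x} : Ideal R)) :=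
    IsLocalRing.of_surjective' (Ideal.Quotient.mk _) Ideal.Quotient.mk_surjective
  have hIle : (Ideal.span {x} : Ideal R) ≤ maximalIdeal R := by
    rw [hmax]; exact Ideal.span_mono (by simp)
  have hmaxS : maximalIdeal (R ⧸ (Ideal.span {x} : Ideal R)) =
      Ideal.span {Ideal.Quotient.mk _ y} := by
    rw [quot_maximalIdeal _ hIle, hmax, Ideal.map_span]
    have himg : (Ideal.Quotient.mk (Ideal.span {x} : Ideal R)) '' {x, y} =
        {0, Ideal.Quotient.mk _ y} := by
      rw [Set.image_insert_eq, Set.image_singleton]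
      congr 1
      exact Ideal.Quotient.eq_zero_iff_mem.mpr (Ideal.subset_span rfl)
    rw [himg]
    exact Submodule.span_insert_zero
  rcases principal_dichotomy _ hmaxS with ⟨k, hk⟩ | hreg
  · left
    refine ⟨k, ?_⟩
    rw [← Ideal.Quotient.eq_zero_iff_mem, map_pow]
    exact hk
  · right
    intro z hz
    rw [← Ideal.Quotient.eq_zero_iff_mem]
    refine hreg _ ?_
    rw [← map_mul, Ideal.Quotient.eq_zero_iff_mem]
    exact hz

/-- A f.g. module over a local ring generated by one element and killed by the maximal ideal
is Artinian. -/
lemma artinian_of_cyclic [IsLocalRing R] (M : Type v) [AddCommGroup M] [Module R M]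
    (g : M) (hg : Submodule.span R {g} = ⊤)
    (htor : (maximalIdeal R) • (⊤ : Submodule R M) = ⊥) : IsArtinian R M := by
  have hcl : ∀ N : Submodule R M, N = ⊥ ∨ N = ⊤ := by
    intro N
    by_cases hN : N = ⊥
    · exact Or.inl hN
    · right
      obtain ⟨z, hzN, hz0⟩ := Submodule.exists_mem_ne_zero_of_ne_bot hN
      have hz : z ∈ Submodule.span R {g} := hg ▸ Submodule.mem_top
      obtain ⟨r, rfl⟩ := Submodule.mem_span_singleton.mp hz
      have hru : IsUnit r := by
        by_contra h'
        have hrm : r ∈ maximalIdeal R := IsLocalRing.mem_maximalIdeal r |>.mpr h'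
        have : r • g ∈ (maximalIdeal R) • (⊤ : Submodule R M) :=
          Submodule.smul_mem_smul hrm Submodule.mem_top
        rw [htor] at this
        exact hz0 (by simpa using this)
      obtain ⟨u, rfl⟩ := hru
      have hgN : g ∈ N := by
        have : (↑u⁻¹ : R) • ((u : R) • g) ∈ N := Submodule.smul_mem _ _ hzN
        simpa [smul_smul] using this
      rw [eq_top_iff, ← hg, Submodule.span_le]
      exact Set.singleton_subset_iff.mpr hgN
  haveI : Finite (Submodule R M) := by
    refine Finite.of_injective (fun N => (N = ⊥ : Prop)) ?_
    intro N N' h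
    rcases hcl N with h1 | h1 <;> rcases hcl N' with h2 | h2 <;>
      simp_all
  exact ⟨Finite.wellFounded_of_trans_of_irrefl _⟩

/-- A f.g. module over a local ring killed by the maximal ideal is Artinian. -/
lemma artinian_of_torsion [IsLocalRing R] :
    ∀ (m : ℕ) (M : Type v) [AddCommGroup M] [Module R M] (f : Fin m → M),
      Submodule.span R (Set.range f) = ⊤ →
      (maximalIdeal R) • (⊤ : Submodule R M) = ⊥ → IsArtinian R M := by
  intro m
  induction m with
  | zero =>
    intro M _ _ f hf htor
    haveI : Subsingleton M := by
      constructor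
      intro a b
      have ha : a ∈ Submodule.span R (Set.range f) := hf ▸ Submodule.mem_top
      rw [Set.range_eq_empty, Submodule.span_empty] at ha
      have hb : b ∈ Submodule.span R (Set.range f) := hf ▸ Submodule.mem_top
      rw [Set.range_eq_empty, Submodule.span_empty] at hb
      simp only [Submodule.mem_bot] at ha hb
      rw [ha, hb]
    infer_instance
  | succ m ih =>
    intro M _ _ f hf htor
    set N : Submodule R M := Submodule.span R (Set.range (f ∘ Fin.castSucc)) with hN
    -- N is Artinian
    have hNart : IsArtinian R N := by
      refine ih N (fun i => ⟨f (Fin.castSucc i), Submodule.subset_span ⟨i, rfl⟩⟩) ?_ ?_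
      · apply Submodule.map_injective_of_injective (Submodule.injective_subtype N)
        have himg : N.subtype '' (Set.range fun i =>
            (⟨f (Fin.castSucc i), Submodule.subset_span ⟨i, rfl⟩⟩ : N)) =
            Set.range (f ∘ Fin.castSucc) := by
          ext z
          constructor
          · rintro ⟨w, ⟨i, rfl⟩, rfl⟩
            exact ⟨i, rfl⟩
          · rintro ⟨i, rfl⟩
            exact ⟨⟨f (Fin.castSucc i), Submodule.subset_span ⟨i, rfl⟩⟩, ⟨i, rfl⟩, rfl⟩
        rw [Submodule.map_span, Submodule.map_subtype_top, himg]
      · rw [eq_bot_iff]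
        intro v hv
        have hv' : (v : M) ∈ Submodule.map N.subtype ((maximalIdeal R) • ⊤) :=
          Submodule.mem_map_of_mem hv
        rw [Submodule.map_smul''] at hv'
        have hv'' : (v : M) ∈ (maximalIdeal R) • (⊤ : Submodule R M) :=
          Submodule.smul_mono le_rfl le_top hv'
        rw [htor] at hv''
        simp only [Submodule.mem_bot] at hv'' ⊢
        exact Subtype.ext hv''
    -- M/N is Artinian
    have hQart : IsArtinian R (M ⧸ N) := by
      refine artinian_of_cyclic _ (N.mkQ (f (Fin.last m))) ?_ ?_
      · rw [eq_top_iff]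
        have hsurj : Submodule.map N.mkQ ⊤ = ⊤ := by
          rw [Submodule.map_top, Submodule.range_mkQ]
        rw [← hsurj, ← hf, Submodule.map_span]
        rw [Submodule.span_le]
        rintro z ⟨w, ⟨i, rfl⟩, rfl⟩
        induction i using Fin.lastCases with
        | last => exact Submodule.subset_span rfl
        | cast j =>
          have hjN : f (Fin.castSucc j) ∈ N := Submodule.subset_span ⟨j, rfl⟩
          have hz : N.mkQ (f (Fin.castSucc j)) = 0 := by
            rw [Submodule.mkQ_apply]
            exact (Submodule.Quotient.mk_eq_zero N).mpr hjN
          rw [hz]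
          exact Submodule.zero_mem _
      · have hsurj : Submodule.map N.mkQ ⊤ = ⊤ := by
          rw [Submodule.map_top, Submodule.range_mkQ]
        rw [← hsurj, ← Submodule.map_smul'', htor]
        exact Submodule.map_bot _
    exact isArtinian_of_range_eq_ker N.subtype N.mkQ
      (by rw [Submodule.range_subtype, Submodule.ker_mkQ])

/-- A f.g. module over a Noetherian local ring killed by a power of the maximal ideal
is Artinian. -/
lemma artinian_of_pow_torsion [IsLocalRing R] [IsNoetherianRing R] :
    ∀ (K : ℕ) (M : Type v) [AddCommGroup M] [Module R M] [Module.Finite R M],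
      ((maximalIdeal R) ^ K) • (⊤ : Submodule R M) = ⊥ → IsArtinian R M := by
  intro K
  induction K with
  | zero =>
    intro M _ _ _ htor
    rw [pow_zero, Ideal.one_eq_top, Submodule.top_smul] at htor
    haveI : Subsingleton M := by
      constructor
      intro a b
      have ha : a ∈ (⊤ : Submodule R M) := Submodule.mem_top
      have hb : b ∈ (⊤ : Submodule R M) := Submodule.mem_top
      rw [htor] at ha hb
      simp only [Submodule.mem_bot] at ha hb
      rw [ha, hb]
    infer_instance
  | succ K ih =>
    intro M _ _ _ htor
    set N : Submodule R M := (maximalIdeal R) • ⊤ with hNdef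
    haveI : IsNoetherian R M := isNoetherian_of_isNoetherianRing_of_finite R M
    haveI hNfin : Module.Finite R N := Module.Finite.iff_fg.mpr (IsNoetherian.noetherian N)
    have hNart : IsArtinian R N := by
      refine ih N ?_
      rw [eq_bot_iff]
      intro v hv
      have hv' : (v : M) ∈ Submodule.map N.subtype (((maximalIdeal R) ^ K) • ⊤) :=
        Submodule.mem_map_of_mem hv
      rw [Submodule.map_smul''] at hv'
      have hle : Submodule.map N.subtype ⊤ ≤ N := by
        rw [Submodule.map_subtype_top]
      have hv2 : (v : M) ∈ ((maximalIdeal R) ^ K) • N := Submodule.smul_mono le_rfl hle hv'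
      have hv3 : (v : M) ∈ ((maximalIdeal R) ^ (K + 1)) • (⊤ : Submodule R M) := by
        rw [pow_succ, mul_smul]
        exact hv2
      rw [htor] at hv3
      simp only [Submodule.mem_bot] at hv3 ⊢
      exact Subtype.ext hv3
    have hQart : IsArtinian R (M ⧸ N) := by
      obtain ⟨n, f, hf⟩ := Module.Finite.exists_fin (R := R) (M := M ⧸ N)
      refine artinian_of_torsion n (M ⧸ N) f hf ?_
      have hsurj : Submodule.map N.mkQ ⊤ = ⊤ := by
        rw [Submodule.map_top, Submodule.range_mkQ]
      rw [← hsurj, ← Submodule.map_smul'']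
      rw [show (maximalIdeal R) • (⊤ : Submodule R M) = N from rfl]
      rw [eq_bot_iff]
      rintro z ⟨w, hw, rfl⟩
      have hz : N.mkQ w = 0 := by
        rw [Submodule.mkQ_apply]
        exact (Submodule.Quotient.mk_eq_zero N).mpr hw
      simp [hz]
    exact isArtinian_of_range_eq_ker N.subtype N.mkQ
      (by rw [Submodule.range_subtype, Submodule.ker_mkQ])


lemma artinian_of_pow_torsion' [IsLocalRing R] [IsNoetherianRing R]
    (K : ℕ) (M : Type v) [AddCommGroup M] [Module R M] [Module.Finite R M]
    (h : ((maximalIdeal R) ^ K) • (⊤ : Submodule R M) = ⊥) : IsArtinian R M :=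
  artinian_of_pow_torsion K M h

/-- If the maximal ideal of a Noetherian local domain has a power contained in a principal
ideal `(c)` with `c ∈ m`, then there is no prime ideal strictly between `⊥` and `m`. -/
lemma no_second_prime [IsDomain R] [IsNoetherianRing R] [IsLocalRing R]
    (c : R) (hc : c ∈ maximalIdeal R) (K : ℕ)
    (hK : (maximalIdeal R) ^ K ≤ Ideal.span {c})
    (Q : Ideal R) (hQp : Q.IsPrime) (hQ0 : Q ≠ ⊥) (hQn : Q ≠ maximalIdeal R) : False := by
  haveI := hQp
  -- c ∉ Q
  have hcQ : c ∉ Q := by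
    intro hcQ'
    have h1 : maximalIdeal R ^ K ≤ Q := le_trans hK (by
      rw [Ideal.span_le, Set.singleton_subset_iff]; exact hcQ')
    have h2 : maximalIdeal R ≤ Q := hQp.le_of_pow_le h1
    exact hQn (le_antisymm (IsLocalRing.le_maximalIdeal hQp.ne_top) h2)
  -- localization
  set Rq := Localization.AtPrime Q with hRq
  set φ := algebraMap R Rq with hφ
  -- saturations
  set Sat : ℕ → Ideal R := fun i => Ideal.comap φ (Ideal.map φ (Q ^ i)) with hSat
  have hSat_anti : ∀ i j, i ≤ j → Sat j ≤ Sat i := by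
    intro i j hij
    exact Ideal.comap_mono (Ideal.map_mono (Ideal.pow_le_pow_right hij))
  have hSat_sat : ∀ i (z : R), z * c ∈ Sat i → z ∈ Sat i := by
    intro i z hz
    have hcu : IsUnit (φ c) := IsLocalization.map_units Rq (⟨c, hcQ⟩ : Q.primeCompl)
    rw [hSat, Ideal.mem_comap, map_mul] at hz
    obtain ⟨v, hv⟩ := hcu.exists_left_inv
    have : φ z = v * (φ z * φ c) := by
      rw [mul_comm (φ z) (φ c), ← mul_assoc, hv, one_mul]
    rw [hSat, Ideal.mem_comap, this]
    exact Ideal.mul_mem_left _ _ hz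
  -- the quotient module R/(c) is Artinian
  set C : Ideal R := Ideal.span {c} with hC
  haveI hart : IsArtinian R (R ⧸ C) := by
    refine artinian_of_pow_torsion' K (R ⧸ C) ?_
    have hsurj : Submodule.map C.mkQ ⊤ = ⊤ := by
      rw [Submodule.map_top, Submodule.range_mkQ]
    rw [← hsurj, ← Submodule.map_smul'']
    have h1 : (maximalIdeal R ^ K) • (⊤ : Submodule R R) ≤ C := by
      rw [Ideal.smul_eq_mul, Ideal.mul_top]
      exact hK
    rw [eq_bot_iff]
    rintro z ⟨w, hw, rfl⟩
    have hz : C.mkQ w = 0 := by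
      rw [Submodule.mkQ_apply]
      exact (Submodule.Quotient.mk_eq_zero C).mpr (h1 hw)
    simp [hz]
  -- stabilization of the chain  Sat (i+1) ⊔ C
  have hstab : ∃ i : ℕ, Submodule.map C.mkQ (Sat (i+1)) = Submodule.map C.mkQ (Sat (i+2)) := by
    have hmono : Monotone (fun i : ℕ => OrderDual.toDual (Submodule.map C.mkQ (Sat (i+1)))) := by
      intro i j hij
      exact Submodule.map_mono (hSat_anti _ _ (by omega))
    obtain ⟨n, hn⟩ := IsArtinian.monotone_stabilizes ⟨_, hmono⟩
    exact ⟨n, OrderDual.toDual.injective (hn (n+1) (Nat.le_succ n))⟩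
  obtain ⟨i₀, hi₀⟩ := hstab
  set i := i₀ + 1 with hi
  -- recover ideal equality up to C
  have hJeq : Sat i ⊔ C = Sat (i+1) ⊔ C := by
    have h1 := congrArg (Submodule.comap C.mkQ) hi₀
    rwa [Submodule.comap_map_mkQ, Submodule.comap_map_mkQ, sup_comm C, sup_comm C] at h1
  -- Nakayama 1 : Sat i = Sat (i+1)
  have hSeq : Sat i = Sat (i+1) := by
    refine le_antisymm ?_ (hSat_anti _ _ (by omega))
    refine Submodule.le_of_le_smul_of_le_jacobson_bot (I := C) (IsNoetherian.noetherian _) ?_ ?_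
    · rw [IsLocalRing.jacobson_eq_maximalIdeal ⊥ bot_ne_top]
      rw [hC, Ideal.span_le, Set.singleton_subset_iff]
      exact hc
    · intro z hz
      have hz2 : z ∈ Sat (i+1) ⊔ C := hJeq ▸ Submodule.mem_sup_left hz
      obtain ⟨y, hy, u, hu, rfl⟩ := Submodule.mem_sup.mp hz2
      obtain ⟨r, rfl⟩ := Ideal.mem_span_singleton'.mp hu
      have hrc : r * c ∈ Sat i := by
        have : r * c = y + r * c - y := by ring
        rw [this]
        exact sub_mem hz (hSat_anti i (i+1) (by omega) hy)
      have hr : r ∈ Sat i := hSat_sat i r hrc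
      refine Submodule.add_mem_sup hy ?_
      rw [Ideal.smul_eq_mul]
      have : r * c = c * r := mul_comm _ _
      rw [this]
      exact Ideal.mul_mem_mul (Ideal.subset_span rfl) hr
  -- push to the localization
  have hmapeq : (Ideal.map φ Q) ^ i = (Ideal.map φ Q) ^ (i + 1) := by
    have h1 : Ideal.map φ (Sat i) = Ideal.map φ (Q ^ i) := Ideal.map_comap_map ..
    have h2 : Ideal.map φ (Sat (i+1)) = Ideal.map φ (Q ^ (i+1)) := Ideal.map_comap_map ..
    rw [← Ideal.map_pow, ← Ideal.map_pow, ← h1, ← h2, hSeq]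
  -- Nakayama 2
  haveI : IsNoetherianRing Rq := IsLocalization.isNoetherianRing Q.primeCompl Rq inferInstance
  have hbot : (Ideal.map φ Q) ^ i = ⊥ := by
    refine Submodule.eq_bot_of_le_smul_of_le_jacobson_bot (Ideal.map φ Q) _
      (IsNoetherian.noetherian _) ?_ ?_
    · have h3 : (Ideal.map φ Q) • (Ideal.map φ Q) ^ i = (Ideal.map φ Q) ^ (i+1) := by
        rw [Ideal.smul_eq_mul, ← pow_succ']
      rw [h3]
      exact le_of_eq hmapeq
    · rw [IsLocalRing.jacobson_eq_maximalIdeal ⊥ bot_ne_top]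
      rw [Localization.AtPrime.map_eq_maximalIdeal]
  -- contradiction
  obtain ⟨z, hzQ, hz0⟩ := Submodule.exists_mem_ne_zero_of_ne_bot hQ0
  have hφz : φ z ≠ 0 := by
    intro h
    exact hz0 (IsLocalization.injective Rq Q.primeCompl_le_nonZeroDivisors (h.trans (map_zero φ).symm))
  have hφzQ : φ z ∈ Ideal.map φ Q := Ideal.mem_map_of_mem φ hzQ
  have : (φ z) ^ i ∈ (Ideal.map φ Q) ^ i := Ideal.pow_mem_pow hφzQ i
  rw [hbot] at this
  have hzi : (φ z) ^ i = 0 := by simpa using this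
  exact hφz (pow_eq_zero_iff (by omega) |>.mp hzi)


/-- The main computation, in a Noetherian local domain where both `x` and the images of
`y` in `R/(x)`, `x` in `R/(y)` are regular. -/
lemma main_case [IsDomain R] [IsLocalRing R]
    (x y : R) (hmax : maximalIdeal R = Ideal.span {x, y})
    (hx0 : x ≠ 0)
    (hR1 : ∀ z, z * y ∈ Ideal.span {x} → z ∈ Ideal.span {x})
    (hR2 : ∀ z, z * x ∈ Ideal.span {y} → z ∈ Ideal.span {y})
    (t₀ u₀ : ℕ) (a w : R) (hw : IsUnit w) (q : R)
    (hqdef : q = y ^ 2 - a * x * y - w * x ^ (u₀ + 2))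
    (hmem : x ^ (t₀ + u₀ + 3) ∈
      Ideal.span {x ^ (t₀ + 2) * y, q} + (maximalIdeal R) ^ (t₀ + u₀ + 4)) :
    False := by
  have R1 := reg_iter x y hR1
  have R2 := reg_iter y x hR2
  set NN : Ideal R := Ideal.span {x, y} with hNN
  have hxN : x ∈ NN := Ideal.subset_span (by simp)
  have hyN : y ∈ NN := Ideal.subset_span (by simp)
  have hNtop : NN ≠ ⊤ := by
    rw [← hmax]
    exact (IsLocalRing.maximalIdeal.isMaximal R).ne_top
  -- q ∈ NN^2
  have hq2 : q ∈ NN ^ 2 := by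
    rw [hqdef]
    refine sub_mem (sub_mem ?_ ?_) ?_
    · rw [sq, sq]
      exact Ideal.mul_mem_mul hyN hyN
    · rw [sq]
      exact Ideal.mul_mem_mul (Ideal.mul_mem_left _ _ hxN) hyN
    · have h1 : x ^ (u₀ + 2) ∈ NN ^ (u₀ + 2) := Ideal.pow_mem_pow hxN _
      have h2 : NN ^ (u₀ + 2) ≤ NN ^ 2 := Ideal.pow_le_pow_right (by omega)
      exact Ideal.mul_mem_left _ _ (h2 h1)
  -- pull apart the membership
  rw [hmax] at hmem
  obtain ⟨g, hg, m, hm, hsum⟩ := Submodule.mem_sup.mp hmem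
  obtain ⟨α, β, hαβ⟩ := Ideal.mem_span_pair.mp hg
  have heq : α * (x ^ (t₀ + 2) * y) + β * q + m = x ^ (t₀ + u₀ + 3) := by
    rw [hαβ]; exact hsum
  -- decompose m on the x-side
  obtain ⟨c₁, r₁, hmdec, hr₁⟩ := pow_span_pair_decomp x y (t₀ + u₀ + 4) m hm
  -- Step C : β ≡ -c₁ y^(s-1)  mod (x)
  have hC : (β + c₁ * y ^ (t₀ + u₀ + 2)) * y ^ 2 ∈ Ideal.span {x} := by
    rw [Ideal.mem_span_singleton']
    refine ⟨x ^ (t₀ + u₀ + 2) - α * x ^ (t₀ + 1) * y - r₁ + β * a * y + β * w * x ^ (u₀ + 1), ?_⟩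
    linear_combination hmdec - heq + β * hqdef
  obtain ⟨b, hb⟩ := Ideal.mem_span_singleton'.mp (R1 2 _ hC)
  -- decompose m on the y-side
  have hm' : m ∈ (Ideal.span {y, x}) ^ (t₀ + u₀ + 4) := by
    rw [Ideal.span_pair_comm]; exact hm
  obtain ⟨d₁, r₂, hmdec2, _⟩ := pow_span_pair_decomp y x (t₀ + u₀ + 4) m hm'
  -- Step E : b w ≡ -x^t₀ mod (y, x^(t₀+1))
  have hE : (x ^ t₀ + b * w - d₁ * x ^ (t₀ + 1)) * x ^ (u₀ + 3) ∈ Ideal.span {y} := by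
    rw [Ideal.mem_span_singleton']
    refine ⟨α * x ^ (t₀ + 2) + β * y - β * a * x + c₁ * w * x ^ (u₀ + 2) * y ^ (t₀ + u₀ + 1)
      + r₂, ?_⟩
    linear_combination heq - β * hqdef - (w * x ^ (u₀ + 2)) * hb - hmdec2
  obtain ⟨e, he⟩ := Ideal.mem_span_singleton'.mp (R2 (u₀ + 3) _ hE)
  -- the descending induction predicate
  set Pred : ℕ → Prop := fun r => ∃ A D E M,
    (x ^ r * y ^ 2 = A * (x ^ (r + 1) * y) + D * (x ^ (r + 1) * q) + E * (y * q) + M) ∧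
    M ∈ NN ^ (r + u₀ + 3) with hPred
  -- base case
  have hbase : Pred (t₀ + 1) := by
    refine ⟨w * α + a, d₁, e * x, w * m - w * c₁ * y ^ (t₀ + u₀ + 2) * q, ?_, ?_⟩
    · linear_combination (-w) * heq - (w * q) * hb + (-(x * q)) * he + (-(x ^ (t₀ + 1))) * hqdef
    · have h4 : t₀ + 1 + u₀ + 3 = t₀ + u₀ + 4 := by omega
      rw [h4]
      refine sub_mem (Ideal.mul_mem_left _ _ hm) ?_
      have h5 : w * c₁ * y ^ (t₀ + u₀ + 2) * q = (w * c₁) * (y ^ (t₀ + u₀ + 2) * q) := by ring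
      rw [h5]
      refine Ideal.mul_mem_left _ _ ?_
      have h6 : y ^ (t₀ + u₀ + 2) * q ∈ NN ^ (t₀ + u₀ + 2) * NN ^ 2 :=
        Ideal.mul_mem_mul (Ideal.pow_mem_pow hyN _) hq2
      rwa [← pow_add] at h6
  -- the descending step
  have hstep : ∀ r : ℕ, Pred (r + 1) → Pred r := by
    intro r hPr
    obtain ⟨A, D, E, M, heqr, hM⟩ := hPr
    have hMK : M ∈ NN ^ (r + u₀ + 4) := by
      have h7 : r + 1 + u₀ + 3 = r + u₀ + 4 := by omega
      rwa [h7] at hM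
    obtain ⟨c, m₁, hMdec, hm₁⟩ := pow_span_pair_decomp x y (r + u₀ + 4) M hMK
    have hm₁' : m₁ ∈ NN ^ (r + u₀ + 3) := by
      have h8 : r + u₀ + 4 - 1 = r + u₀ + 3 := by omega
      rwa [h8] at hm₁
    -- E-extraction
    have hEy : (E + c * y ^ (r + u₀ + 1)) * y ^ 3 ∈ Ideal.span {x} := by
      rw [Ideal.mem_span_singleton']
      refine ⟨x ^ r * y ^ 2 - A * x ^ (r + 1) * y - D * x ^ (r + 1) * q + E * a * y ^ 2
        + E * w * y * x ^ (u₀ + 1) - m₁, ?_⟩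
      linear_combination heqr + (E * y) * hqdef + hMdec
    obtain ⟨f, hf⟩ := Ideal.mem_span_singleton'.mp (R1 3 _ hEy)
    -- new tail
    have hM₂ : M - c * y ^ (r + u₀ + 2) * q ∈ NN ^ (r + u₀ + 4) := by
      refine sub_mem hMK ?_
      have h9 : c * y ^ (r + u₀ + 2) * q = c * (y ^ (r + u₀ + 2) * q) := by ring
      rw [h9]
      refine Ideal.mul_mem_left _ _ ?_
      have h10 : y ^ (r + u₀ + 2) * q ∈ NN ^ (r + u₀ + 2) * NN ^ 2 :=
        Ideal.mul_mem_mul (Ideal.pow_mem_pow hyN _) hq2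
      rwa [← pow_add] at h10
    obtain ⟨c₂, m₂, hM₂dec, hm₂⟩ := pow_span_pair_decomp x y (r + u₀ + 4) _ hM₂
    have hm₂' : m₂ ∈ NN ^ (r + u₀ + 3) := by
      have h8 : r + u₀ + 4 - 1 = r + u₀ + 3 := by omega
      rwa [h8] at hm₂
    -- c₂ is divisible by x
    have hc₂x : c₂ * y ^ (r + u₀ + 4) ∈ Ideal.span {x} := by
      rw [Ideal.mem_span_singleton']
      refine ⟨x ^ r * y ^ 2 - A * x ^ (r + 1) * y - D * x ^ (r + 1) * q - f * (y * q) - m₂, ?_⟩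
      linear_combination heqr - (y * q) * hf + hM₂dec
    obtain ⟨c₃, hc₃⟩ := Ideal.mem_span_singleton'.mp (R1 (r + u₀ + 4) _ hc₂x)
    -- divide by x
    have hzero : x * (x ^ r * y ^ 2 - A * (x ^ (r + 1) * y) - D * (x ^ (r + 1) * q)
        - f * (y * q) - (c₃ * y ^ (r + u₀ + 4) + m₂)) = 0 := by
      linear_combination heqr - (y * q) * hf + hM₂dec - y ^ (r + u₀ + 4) * hc₃
    have hinner := (mul_eq_zero.mp hzero).resolve_left hx0
    refine ⟨A, D, f, c₃ * y ^ (r + u₀ + 4) + m₂, by linear_combination hinner, ?_⟩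
    refine add_mem ?_ hm₂'
    have h11 : c₃ * y ^ (r + u₀ + 4) = (c₃ * y) * y ^ (r + u₀ + 3) := by ring
    rw [h11]
    exact Ideal.mul_mem_left _ _ (Ideal.pow_mem_pow hyN _)
  -- descend to 0
  have hdown : ∀ r : ℕ, Pred r → Pred 0 := by
    intro r
    induction r with
    | zero => exact id
    | succ r ih => intro h; exact ih (hstep r h)
  obtain ⟨A, D, E, M, heq0, hM0⟩ := hdown _ hbase
  -- final contradiction
  obtain ⟨c₅, m₃, hMdec3, _⟩ := pow_span_pair_decomp x y (0 + u₀ + 3) M hM0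
  have hfin : (1 - E * y - c₅ * y ^ (u₀ + 1)) * y ^ 2 ∈ Ideal.span {x} := by
    rw [Ideal.mem_span_singleton']
    refine ⟨A * y + D * q - E * a * y ^ 2 - E * w * y * x ^ (u₀ + 1) + m₃, ?_⟩
    linear_combination -heq0 + (-(E * y)) * hqdef - hMdec3
  have hone : (1 : R) - E * y - c₅ * y ^ (u₀ + 1) ∈ Ideal.span {x} := R1 2 _ hfin
  have h1N : (1 : R) ∈ NN := by
    have hx' : Ideal.span {x} ≤ NN := Ideal.span_mono (by simp)
    have h12 : (1 : R) = (1 - E * y - c₅ * y ^ (u₀ + 1)) + (E * y) + (c₅ * y ^ u₀) * y := by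
      ring
    rw [h12]
    exact add_mem (add_mem (hx' hone) (Ideal.mul_mem_left _ _ hyN)) (Ideal.mul_mem_left _ _ hyN)
  exact hNtop (Ideal.eq_top_iff_one _ |>.mpr h1N)

end KeyAux

open KeyAux

/-- Let `T` be a two-dimensional regular local ring with
`n = (x₁,x₂)`, `t ≥ 2`, `s ≥ t+1`, `w` a unit and
`q = x₂² − a x₁ x₂ − w x₁^{s−t+1}`.  Then `x₁^s ∉ (x₁^t x₂, q) + n^{s+1}`. -/
theorem x1_pow_s_not_in
    (T : Type*) [CommRing T] [IsLocalRing T] [IsNoetherianRing T]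
    (x₁ x₂ : T) (hgen : maximalIdeal T = Ideal.span {x₁, x₂})
    (hdim : ringKrullDim T = 2)
    (t s : ℕ) (ht : 2 ≤ t) (hs : t + 1 ≤ s)
    (a w : T) (hw : IsUnit w)
    (q : T) (hq : q = x₂ ^ 2 - a * x₁ * x₂ - w * x₁ ^ (s - t + 1)) :
    x₁ ^ s ∉ Ideal.span {x₁ ^ t * x₂, q} + (maximalIdeal T) ^ (s + 1) := by
  intro hmem
  -- normalize the numerology
  obtain ⟨t₀, rfl⟩ : ∃ t₀, t = t₀ + 2 := ⟨t - 2, by omega⟩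
  obtain ⟨u₀, rfl⟩ : ∃ u₀, s = t₀ + u₀ + 3 := ⟨s - t₀ - 3, by omega⟩
  have hexp : t₀ + u₀ + 3 - (t₀ + 2) + 1 = u₀ + 2 := by omega
  rw [hexp] at hq
  have hexp2 : t₀ + u₀ + 3 + 1 = t₀ + u₀ + 4 := by omega
  rw [hexp2] at hmem
  -- extract a chain of primes of length 2
  have hchain : ∃ p : LTSeries (PrimeSpectrum T), 2 ≤ p.length := by
    by_contra hno
    push_neg at hno
    have hle : ringKrullDim T ≤ 1 := by
      unfold ringKrullDim Order.krullDim
      refine iSup_le ?_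
      intro p
      have h1 : p.length ≤ 1 := Nat.lt_succ_iff.mp (hno p)
      exact_mod_cast h1
    rw [hdim] at hle
    norm_num at hle
  obtain ⟨p, hp⟩ := hchain
  set P := p ⟨0, by omega⟩ with hP
  set Q := p ⟨1, by omega⟩ with hQ
  set P₂ := p ⟨2, by omega⟩ with hP₂
  have hPQ : P < Q := p.strictMono (Fin.mk_lt_mk.mpr (by omega))
  have hQP₂ : Q < P₂ := p.strictMono (Fin.mk_lt_mk.mpr (by omega))
  -- pass to the quotient domain T' = T / P
  haveI hPp : P.asIdeal.IsPrime := P.2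
  set T' := T ⧸ P.asIdeal with hT'
  set mk : T →+* T' := Ideal.Quotient.mk P.asIdeal with hmk
  haveI : IsDomain T' := Ideal.Quotient.isDomain P.asIdeal
  haveI : IsLocalRing T' := IsLocalRing.of_surjective' mk Ideal.Quotient.mk_surjective
  have hPle : P.asIdeal ≤ maximalIdeal T := IsLocalRing.le_maximalIdeal hPp.ne_top
  have hmapmax : maximalIdeal T' = Ideal.map mk (maximalIdeal T) :=
    quot_maximalIdeal P.asIdeal hPle
  set x : T' := mk x₁ with hx
  set y : T' := mk x₂ with hy
  have hmax' : maximalIdeal T' = Ideal.span {x, y} := by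
    rw [hmapmax, hgen, Ideal.map_span, Set.image_insert_eq, Set.image_singleton]
  -- membership in the quotient
  have hmem' : x ^ (t₀ + u₀ + 3) ∈
      Ideal.span {x ^ (t₀ + 2) * y, mk q} + (maximalIdeal T') ^ (t₀ + u₀ + 4) := by
    have h1 : mk (x₁ ^ (t₀ + u₀ + 3)) ∈
        Ideal.map mk (Ideal.span {x₁ ^ (t₀ + 2) * x₂, q} + (maximalIdeal T) ^ (t₀ + u₀ + 4)) :=
      Ideal.mem_map_of_mem mk hmem
    rw [Submodule.add_eq_sup, Ideal.map_sup, Ideal.map_pow, Ideal.map_span, Set.image_insert_eq,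
      Set.image_singleton, ← hmapmax] at h1
    rw [Submodule.add_eq_sup]
    simpa only [map_pow, map_mul] using h1
  have hq' : mk q = y ^ 2 - mk a * x * y - mk w * x ^ (u₀ + 2) := by
    rw [hq]
    push_cast [map_sub, map_mul, map_pow]
    ring
  -- the second prime in the quotient
  set Q' : Ideal T' := Ideal.map mk Q.asIdeal with hQ'
  have hPQi : P.asIdeal < Q.asIdeal := (PrimeSpectrum.asIdeal_lt_asIdeal _ _).mpr hPQ
  haveI hQ'p : Q'.IsPrime := by
    refine Ideal.map_isPrime_of_surjective Ideal.Quotient.mk_surjective ?_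
    rw [Ideal.mk_ker]
    exact le_of_lt hPQi
  have hQ'0 : Q' ≠ ⊥ := by
    obtain ⟨z, hzQ, hzP⟩ := SetLike.exists_of_lt hPQi
    intro hbot
    have : mk z ∈ Q' := Ideal.mem_map_of_mem mk hzQ
    rw [hbot] at this
    exact hzP (Ideal.Quotient.eq_zero_iff_mem.mp (by simpa using this))
  have hQ'n : Q' ≠ maximalIdeal T' := by
    intro heqQ
    have h1 : Ideal.comap mk Q' = Q.asIdeal := by
      rw [hQ', Ideal.comap_map_of_surjective mk Ideal.Quotient.mk_surjective]
      rw [← RingHom.ker_eq_comap_bot, Ideal.mk_ker]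
      exact sup_eq_left.mpr (le_of_lt hPQi)
    have h2 : maximalIdeal T ≤ Ideal.comap mk Q' := by
      rw [heqQ, hmapmax]
      exact Ideal.le_comap_map
    rw [h1] at h2
    have h3 : Q.asIdeal = maximalIdeal T :=
      le_antisymm (IsLocalRing.le_maximalIdeal Q.2.ne_top) h2
    have h4 : Q.asIdeal < P₂.asIdeal := (PrimeSpectrum.asIdeal_lt_asIdeal _ _).mpr hQP₂
    have h5 : P₂.asIdeal ≤ maximalIdeal T := IsLocalRing.le_maximalIdeal P₂.2.ne_top
    rw [h3] at h4
    exact absurd (lt_of_lt_of_le h4 h5) (lt_irrefl _)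
  -- degeneracy helper
  have hdeg : ∀ c : T', c ∈ maximalIdeal T' → ∀ K : ℕ,
      (maximalIdeal T') ^ K ≤ Ideal.span {c} → False := by
    intro c hc K hK
    exact no_second_prime c hc K hK Q' hQ'p hQ'0 hQ'n
  have hxM : x ∈ maximalIdeal T' := by rw [hmax']; exact Ideal.subset_span (by simp)
  have hyM : y ∈ maximalIdeal T' := by rw [hmax']; exact Ideal.subset_span (by simp)
  -- dichotomies
  rcases dichotomy x y hmax' with ⟨k, hk⟩ | hR1
  · -- y^k ∈ (x) : maximal ideal power inside (x)
    refine hdeg x hxM k ?_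
    intro z hz
    rw [hmax'] at hz
    obtain ⟨c, r, rfl, -⟩ := pow_span_pair_decomp x y k z hz
    exact add_mem (Ideal.mul_mem_left _ _ hk)
      (Ideal.mul_mem_right _ _ (Ideal.mem_span_singleton_self x))
  rcases dichotomy y x (by rw [hmax', Ideal.span_pair_comm]) with ⟨k, hk⟩ | hR2
  · refine hdeg y hyM k ?_
    intro z hz
    rw [hmax', Ideal.span_pair_comm] at hz
    obtain ⟨c, r, rfl, -⟩ := pow_span_pair_decomp y x k z hz
    exact add_mem (Ideal.mul_mem_left _ _ hk)
      (Ideal.mul_mem_right _ _ (Ideal.mem_span_singleton_self y))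
  -- x ≠ 0
  by_cases hx0 : x = 0
  · have h1 : (1 : T') ∈ Ideal.span {y} := hR2 1 (by rw [hx0, one_mul]; simp)
    have h2 : Ideal.span {y} ≤ maximalIdeal T' := by
      rw [Ideal.span_le, Set.singleton_subset_iff]
      exact hyM
    exact (IsLocalRing.maximalIdeal.isMaximal T').ne_top
      (Ideal.eq_top_iff_one _ |>.mpr (h2 h1))
  -- the main computation
  exact main_case x y hmax' hx0 hR1 hR2 t₀ u₀ (mk a) (mk w) (hw.map mk) (mk q) hq' hmem'
end

section
/- Let (R, n) be a regular local ring of dimension h, I ⊆ n² an ideal, and suppose A = R/I is a stretched Artinian local ring of socle degree s ≥ 2 with Cohen-Macaulay type τ = h (maximal type). Then there is a minimal generating set x₁, …, x_h of n such that I = ({x₁ x_j}_{2≤j≤h}, {x_i x_j}_{2≤i≤j≤h}, x₁^{s+1}). -/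
open IsLocalRing

/-- The minimal number of generators of a submodule. -/
noncomputable def minGen {R M : Type*} [Ring R] [AddCommGroup M] [Module R M]
    (N : Submodule R M) : ℕ :=
  sInf {n | ∃ s : Finset M, s.card = n ∧ Submodule.span R (s : Set M) = N}

lemma minGen_exists {R M : Type*} [Ring R] [AddCommGroup M] [Module R M]
    {N : Submodule R M} {n : ℕ} (hN : minGen N = n) (hn : n ≠ 0) :
    ∃ T : Finset M, T.card = n ∧ Submodule.span R (T : Set M) = N := by
  have hne : {m | ∃ s : Finset M, s.card = m ∧ Submodule.span R (s : Set M) = N}.Nonempty := by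
    by_contra hcon
    rw [Set.not_nonempty_iff_eq_empty] at hcon
    rw [minGen, hcon, Nat.sInf_empty] at hN
    exact hn hN.symm
  have h2 := Nat.sInf_mem hne
  rw [minGen] at hN
  rw [hN] at h2
  exact h2

lemma minGen_le_card {R M : Type*} [Ring R] [AddCommGroup M] [Module R M]
    {N : Submodule R M} {n : ℕ} (hN : minGen N = n) {T : Finset M}
    (hT : Submodule.span R (T : Set M) = N) : n ≤ T.card :=
  hN ▸ Nat.sInf_le ⟨T, rfl, hT⟩


theorem keyA (A : Type*) [CommRing A] [IsLocalRing A] [IsNoetherianRing A]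
    (h2 : IsUnit (2:A)) (h s : ℕ) (hh : 1 ≤ h) (hs : 2 ≤ s)
    (hgen : ∃ T : Finset A, T.card ≤ h ∧ Ideal.span (T : Set A) = maximalIdeal A)
    (u : A) (hu : (maximalIdeal A)^2 = Ideal.span {u})
    (hsoc : (maximalIdeal A)^s ≠ ⊥) (htop : (maximalIdeal A)^(s+1) = ⊥)
    (htUB : ∃ T : Finset A, T.card = h ∧
      Ideal.span (T : Set A) = Submodule.colon ⊥ ((maximalIdeal A : Ideal A) : Set A))
    (htLB : ∀ T : Finset A,
      Ideal.span (T : Set A) = Submodule.colon ⊥ ((maximalIdeal A : Ideal A) : Set A) → h ≤ T.card) :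
    ∃ y : ℕ → A,
      maximalIdeal A = Ideal.span (y '' Set.Icc 1 h) ∧
      (maximalIdeal A)^2 = Ideal.span {y 1 ^ 2} ∧
      (∀ j, 2 ≤ j → j ≤ h → y j ∈ Submodule.colon (⊥ : Ideal A) ((maximalIdeal A : Ideal A) : Set A)) ∧
      (∀ t, 2 ≤ t → (maximalIdeal A)^t = Ideal.span {y 1 ^ t}) := by
  classical
  set m : Ideal A := maximalIdeal A with hm
  set V : Ideal A := Submodule.colon ⊥ (m : Set A) with hV
  -- step 1
  have hm2ne : m^2 ≠ ⊥ := by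
    intro hbot
    exact hsoc (eq_bot_iff.mpr (le_trans (Ideal.pow_le_pow_right hs) hbot.le))
  -- step 2
  have hm23 : m^2 ≠ m^3 := by
    intro heq
    have hstab : ∀ t, 2 ≤ t → m^t = m^2 := by
      intro t ht
      induction t, ht using Nat.le_induction with
      | base => rfl
      | succ t ht ih =>
        have h1 : m^(t+1) = m^t * m := pow_succ m t
        rw [h1, ih, ← pow_succ, ← heq]
    exact hm2ne (by rw [← hstab (s+1) (by omega), htop])
  -- step 3: find y1
  have hy1ex : ∃ y1 ∈ m, y1^2 ∉ m^3 := by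
    by_contra hcon
    push_neg at hcon
    have hprod : ∀ a ∈ m, ∀ b ∈ m, a*b ∈ m^3 := by
      intro a ha b hb
      have h1 : (a+b)^2 - a^2 - b^2 ∈ m^3 :=
        sub_mem (sub_mem (hcon _ (add_mem ha hb)) (hcon _ ha)) (hcon _ hb)
      have h2' : (a+b)^2 - a^2 - b^2 = 2*(a*b) := by ring
      rw [h2'] at h1
      obtain ⟨d, hd⟩ := h2.exists_left_inv
      have h3 : a*b = d*(2*(a*b)) := by
        rw [← mul_assoc, hd, one_mul]
      rw [h3]
      exact Ideal.mul_mem_left _ _ h1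
    have hle : m^2 ≤ m^3 := by
      rw [pow_two]
      exact Ideal.mul_le.mpr hprod
    exact hm23 (le_antisymm hle (Ideal.pow_le_pow_right (by omega)))
  obtain ⟨y1, hy1m, hy1sq⟩ := hy1ex
  -- step 4
  have hm2 : m^2 = Ideal.span {y1^2} := by
    have hy2u : y1^2 ∈ Ideal.span {u} := hu ▸ Ideal.pow_mem_pow hy1m 2
    obtain ⟨c, hc⟩ := Ideal.mem_span_singleton'.mp hy2u
    have hcu : IsUnit c := by
      by_contra hcnu
      apply hy1sq
      rw [← hc]
      have h31 : m^3 = m^2 * m := by ring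
      rw [h31]
      have hum : u ∈ m^2 := hu ▸ Ideal.subset_span rfl
      have hcm : c ∈ m := (mem_maximalIdeal c).mpr hcnu
      rw [mul_comm c u]
      exact Ideal.mul_mem_mul hum hcm
    obtain ⟨d, hd⟩ := hcu.exists_left_inv
    apply le_antisymm
    · rw [hu, Ideal.span_singleton_le_iff_mem, Ideal.mem_span_singleton']
      exact ⟨d, by rw [← hc, ← mul_assoc, hd, one_mul]⟩
    · exact (Ideal.span_singleton_le_iff_mem _).mpr (Ideal.pow_mem_pow hy1m 2)
  -- step 5: m^t = (y1^t) for t ≥ 2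
  have hmul : ∀ r ∈ Ideal.span {y1^2}, ∀ a ∈ m, ∃ c : A, r * a = c * y1^3 := by
    intro r hr a ha
    obtain ⟨cr, hcr⟩ := Ideal.mem_span_singleton'.mp hr
    have hay : a * y1 ∈ Ideal.span {y1^2} := by
      rw [← hm2, pow_two]
      exact Ideal.mul_mem_mul ha hy1m
    obtain ⟨ca, hca⟩ := Ideal.mem_span_singleton'.mp hay
    refine ⟨cr * ca, ?_⟩
    calc r * a = cr * (a * y1) * y1 := by rw [← hcr]; ring
    _ = cr * (ca * y1^2) * y1 := by rw [hca]
    _ = cr * ca * y1^3 := by ring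
  have hmt : ∀ t, 2 ≤ t → m^t = Ideal.span {y1^t} := by
    intro t ht
    induction t, ht using Nat.le_induction with
    | base => exact hm2
    | succ t ht ih =>
      apply le_antisymm
      · rw [pow_succ, ih]
        apply Ideal.mul_le.mpr
        intro r hr a ha
        obtain ⟨cr, hcr⟩ := Ideal.mem_span_singleton'.mp hr
        have hay : a * y1 ∈ Ideal.span {y1^2} := by
          rw [← hm2, pow_two]
          exact Ideal.mul_mem_mul ha hy1m
        obtain ⟨ca, hca⟩ := Ideal.mem_span_singleton'.mp hay
        rw [Ideal.mem_span_singleton']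
        obtain ⟨k, rfl⟩ : ∃ k, t = k + 1 := ⟨t-1, by omega⟩
        refine ⟨cr * ca, ?_⟩
        calc cr * ca * y1^(k+1+1) = cr * y1^k * (ca * y1^2) := by ring
        _ = cr * y1^k * (a * y1) := by rw [hca]
        _ = (cr * y1^(k+1)) * a := by ring
        _ = r * a := by rw [hcr]
      · exact (Ideal.span_singleton_le_iff_mem _).mpr (Ideal.pow_mem_pow hy1m (t+1))
  -- step 6: nonvanishing
  have hmtne : ∀ t, t ≤ s → m^t ≠ ⊥ := by
    intro t hts hbot
    exact hsoc (eq_bot_iff.mpr (le_trans (Ideal.pow_le_pow_right hts) hbot.le))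
  have hy1t : ∀ t, 2 ≤ t → t ≤ s → y1^t ≠ 0 := by
    intro t h2t hts h0
    exact hmtne t hts (by rw [hmt t h2t, h0, Ideal.span_singleton_eq_bot.mpr rfl])
  -- step 7 : V ≤ m
  have hVm : V ≤ m := by
    apply le_maximalIdeal
    intro hVtop
    have h1V : (1:A) ∈ V := hVtop ▸ Submodule.mem_top
    rw [hV, Submodule.mem_colon] at h1V
    apply hm2ne
    have : m ≤ ⊥ := by
      intro p hp
      simpa using h1V p hp
    rw [eq_bot_iff]
    calc m^2 ≤ m := Ideal.pow_le_self two_ne_zero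
    _ ≤ ⊥ := this
  -- step 8 : m^s ≤ V
  have hmsV : m^s ≤ V := by
    intro a ha
    rw [hV, Submodule.mem_colon]
    intro p hp
    have : a * p ∈ m^(s+1) := by
      rw [pow_succ]
      exact Ideal.mul_mem_mul ha hp
    rw [htop] at this
    simpa using this
  -- step 9 : V ∩ m^2 ≤ (y1^s)
  have hVcap : ∀ v ∈ V, v ∈ m^2 → v ∈ Ideal.span {y1^s} := by
    have key : ∀ d, ∀ v ∈ V, v ∈ m^(s-d) → 2 ≤ s - d → v ∈ Ideal.span {y1^s} := by
      intro d
      induction d with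
      | zero =>
        intro v hv hvm _
        rw [← hmt s hs]
        simpa using hvm
      | succ d ih =>
        intro v hv hvm h2t
        set t := s - (d+1) with hts'
        have htd : t + 1 = s - d := by omega
        rw [hmt t h2t] at hvm
        obtain ⟨c, hc⟩ := Ideal.mem_span_singleton'.mp hvm
        by_cases hcu : IsUnit c
        · exfalso
          obtain ⟨e, he⟩ := hcu.exists_left_inv
          have hytV : y1^t ∈ V := by
            have : y1^t = e * v := by rw [← hc, ← mul_assoc, he, one_mul]
            rw [this]
            exact Ideal.mul_mem_left _ _ hv
          rw [hV, Submodule.mem_colon] at hytV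
          have h0 : y1^t * y1 = 0 := by simpa using hytV y1 hy1m
          have : y1^(t+1) = 0 := by rw [pow_succ]; exact h0
          exact hy1t (t+1) (by omega) (by omega) this
        · have hcm : c ∈ m := (mem_maximalIdeal c).mpr hcu
          apply ih v hv
          · rw [← htd, pow_succ, ← hc, mul_comm c]
            exact Ideal.mul_mem_mul (Ideal.pow_mem_pow hy1m t) hcm
          · omega
    intro v hv hvm
    exact key (s-2) v hv (by rwa [show s - (s-2) = 2 by omega]) (by omega)
  -- step 10 : y1 ∉ V ⊔ m^2
  have hy1nV : y1 ∉ V ⊔ m^2 := by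
    intro hmem
    obtain ⟨σ, hσ, q, hq, hsum⟩ := Submodule.mem_sup.mp hmem
    apply hy1sq
    have hσy : σ * y1 = 0 := by
      rw [hV, Submodule.mem_colon] at hσ
      simpa using hσ y1 hy1m
    have : y1^2 = σ * y1 + q * y1 := by rw [← add_mul, hsum]; ring
    rw [this, hσy, zero_add]
    have h31 : m^3 = m^2 * m := by ring
    rw [h31]
    exact Ideal.mul_mem_mul hq hy1m
  -- cotangent setup
  set k := ResidueField A with hk
  set U := CotangentSpace A with hU
  set θ : ↥(maximalIdeal A) →ₗ[A] U := (maximalIdeal A).toCotangent with hθ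
  have halg : Function.Surjective (algebraMap A k) := Ideal.Quotient.mk_surjective
  set V' : Submodule A ↥(maximalIdeal A) := Submodule.comap (maximalIdeal A).subtype V with hV'
  set W : Submodule k U := Submodule.span k (θ '' (V' : Set ↥(maximalIdeal A))) with hW
  have hWA : Submodule.restrictScalars A W = Submodule.map θ V' := by
    rw [hW, Submodule.restrictScalars_span A k halg, ← Submodule.map_span, Submodule.span_eq]
  have hWmem : ∀ x : ↥(maximalIdeal A), θ x ∈ W ↔ (x : A) ∈ V ⊔ m^2 := by
    intro x
    constructor
    · intro hx
      have hx' : θ x ∈ Submodule.map θ V' := by rw [← hWA]; exact hx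
      obtain ⟨v, hvV, hveq⟩ := hx'
      have hker : x - v ∈ LinearMap.ker θ := by
        rw [LinearMap.mem_ker, map_sub, hveq, sub_self]
      have hker' : ((x - v : ↥(maximalIdeal A)) : A) ∈ (maximalIdeal A)^2 :=
        (Ideal.mem_toCotangent_ker _).mp hker
      have : (x:A) = (v:A) + ((x-v : ↥(maximalIdeal A)):A) := by
        push_cast
        ring
      rw [this]
      exact Submodule.add_mem_sup hvV hker'
    · intro hx
      obtain ⟨σ, hσ, q, hq, hsum⟩ := Submodule.mem_sup.mp hx
      have hσm : σ ∈ maximalIdeal A := hVm hσ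
      have hqm : q ∈ maximalIdeal A := Ideal.pow_le_self two_ne_zero hq
      have hxv : x = ⟨σ, hσm⟩ + ⟨q, hqm⟩ := by
        ext
        simp [← hsum]
      have hθq : θ ⟨q, hqm⟩ = 0 := (Ideal.toCotangent_eq_zero _ _).mpr hq
      rw [hxv, map_add, hθq, add_zero]
      apply Submodule.subset_span
      exact ⟨⟨σ, hσm⟩, hσ, rfl⟩
  -- step 12 : finrank U ≤ h
  haveI : FiniteDimensional k U := inferInstanceAs (FiniteDimensional (ResidueField A) (CotangentSpace A))
  obtain ⟨T, hTcard, hTspan⟩ := hgen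
  have hTsub : ∀ t ∈ T, t ∈ maximalIdeal A := by
    intro t ht
    have : t ∈ Ideal.span (T : Set A) := Ideal.subset_span ht
    rw [hTspan] at this
    exact this
  set lift : {t // t ∈ T} → ↥(maximalIdeal A) := fun t => ⟨t.1, hTsub t.1 t.2⟩ with hlift
  have hliftspan : Submodule.span A (Set.range lift) = ⊤ := by
    apply Submodule.map_injective_of_injective (Submodule.injective_subtype (maximalIdeal A))
    rw [Submodule.map_span, Submodule.map_top, Submodule.range_subtype]
    have : (maximalIdeal A).subtype '' (Set.range lift) = (T : Set A) := by
      ext z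
      constructor
      · rintro ⟨w, ⟨t, rfl⟩, rfl⟩
        exact t.2
      · intro hz
        exact ⟨lift ⟨z, hz⟩, ⟨⟨z, hz⟩, rfl⟩, rfl⟩
    rw [this]
    exact hTspan
  have hUle : Module.finrank k U ≤ h := by
    have htopk : Submodule.span k (Set.range (θ ∘ lift)) = ⊤ := by
      rw [Set.range_comp]
      exact CotangentSpace.span_image_eq_top_iff.mpr hliftspan
    have := finrank_le_of_span_eq_top htopk
    rw [Fintype.card_coe] at this
    omega
  -- step 13
  set x1' : ↥(maximalIdeal A) := ⟨y1, hy1m⟩ with hx1'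
  set u1 : U := θ x1' with hu1def
  have hu1W : u1 ∉ W := fun hmem => hy1nV ((hWmem x1').mp hmem)
  have hu1ne : u1 ≠ 0 := fun h0 => hu1W (h0 ▸ Submodule.zero_mem W)
  -- step 14 : basis of W
  set nW := Module.finrank k ↥W with hnW
  set b : Module.Basis (Fin nW) k ↥W := Module.finBasis k ↥W with hb
  set bv : Fin nW → U := fun i => ((b i : ↥W) : U) with hbv
  have hbW : Submodule.span k (Set.range bv) = W := by
    have h1 : Submodule.map W.subtype (Submodule.span k (Set.range b)) = W := by
      rw [b.span_eq, Submodule.map_top, Submodule.range_subtype]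
    rw [← h1, Submodule.map_span, ← Set.range_comp]
    rfl
  -- step 15 : preimages in V
  have hpre : ∀ i : Fin nW, ∃ x : ↥(maximalIdeal A), x ∈ V' ∧ θ x = bv i := by
    intro i
    have hbiW : bv i ∈ W := (b i).2
    have : bv i ∈ Submodule.map θ V' := by rw [← hWA]; exact hbiW
    obtain ⟨x, hx, hxeq⟩ := this
    exact ⟨x, hx, hxeq⟩
  choose xi hxiV hxieq using hpre
  set vA : Fin nW → A := fun i => ((xi i : ↥(maximalIdeal A)) : A) with hvA
  have hvAV : ∀ i, vA i ∈ V := fun i => hxiV i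
  have hvAspanV : Ideal.span (Set.range vA) ≤ V := by
    rw [Ideal.span_le]
    rintro z ⟨i, rfl⟩
    exact hvAV i
  -- step 16 : V = span (range vA ∪ {y1^s}) and h ≤ nW + 1
  have hWxi : W = Submodule.span k (θ '' Set.range xi) := by
    rw [← hbW]
    congr 1
    ext z
    constructor
    · rintro ⟨i, rfl⟩
      exact ⟨xi i, ⟨i, rfl⟩, hxieq i⟩
    · rintro ⟨w, ⟨i, rfl⟩, rfl⟩
      exact ⟨i, (hxieq i).symm⟩
  have hVspan : V = Ideal.span (Set.range vA ∪ {y1^s}) := by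
    apply le_antisymm
    · intro w hw
      set x : ↥(maximalIdeal A) := ⟨w, hVm hw⟩ with hx
      have hθxW : θ x ∈ W := by
        rw [hW]
        exact Submodule.subset_span ⟨x, hw, rfl⟩
      have hθxW' : θ x ∈ Submodule.map θ (Submodule.span A (Set.range xi)) := by
        rw [Submodule.map_span]
        have : θ x ∈ Submodule.restrictScalars A (Submodule.span k (θ '' Set.range xi)) := by
          rw [← hWxi]; exact hθxW
        rwa [Submodule.restrictScalars_span A k halg] at this
      obtain ⟨ξ, hξ, hξeq⟩ := hθxW'
      have hker : ((x - ξ : ↥(maximalIdeal A)) : A) ∈ (maximalIdeal A)^2 := by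
        apply (Ideal.mem_toCotangent_ker _).mp
        rw [LinearMap.mem_ker, map_sub, hξeq, sub_self]
      have hξA : (ξ : A) ∈ Ideal.span (Set.range vA) := by
        have := Submodule.mem_map_of_mem (f := (maximalIdeal A).subtype) hξ
        rw [Submodule.map_span] at this
        have heq : (maximalIdeal A).subtype '' Set.range xi = Set.range vA := by
          ext z
          constructor
          · rintro ⟨w', ⟨i, rfl⟩, rfl⟩
            exact ⟨i, rfl⟩
          · rintro ⟨i, rfl⟩
            exact ⟨xi i, ⟨i, rfl⟩, rfl⟩
        rw [heq] at this
        exact this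
      have hdiff : w - (ξ:A) ∈ Ideal.span {y1^s} := by
        apply hVcap
        · exact sub_mem hw (hvAspanV hξA)
        · simpa using hker
      have : w = (ξ:A) + (w - (ξ:A)) := by ring
      rw [this]
      apply Submodule.add_mem
      · exact Ideal.span_mono Set.subset_union_left hξA
      · exact Ideal.span_mono Set.subset_union_right hdiff
    · rw [Ideal.span_le]
      rintro z (⟨i, rfl⟩ | hz)
      · exact hvAV i
      · rw [Set.mem_singleton_iff] at hz
        subst hz
        exact hmsV (Ideal.pow_mem_pow hy1m s)
  have hhle : h ≤ nW + 1 := by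
    classical
    set TV : Finset A := (Finset.univ.image vA) ∪ {y1^s} with hTV
    have hTVspan : Ideal.span (TV : Set A) = V := by
      rw [hTV]
      push_cast
      rw [Set.image_univ]
      exact hVspan.symm
    have := htLB TV hTVspan
    calc h ≤ TV.card := this
    _ ≤ (Finset.univ.image vA).card + 1 := by
        rw [hTV]
        exact le_trans (Finset.card_union_le _ _) (by simp)
    _ ≤ nW + 1 := by
        have := Finset.card_image_le (s := (Finset.univ : Finset (Fin nW))) (f := vA)
        simpa using Nat.add_le_add_right (by simpa using this) 1
  -- step 17-18 : W ⊔ span{u1} = ⊤ and h = nW + 1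
  have hinf : W ⊓ Submodule.span k {u1} = ⊥ := by
    rw [eq_bot_iff]
    intro z hz
    obtain ⟨hzW, hzS⟩ := hz
    obtain ⟨c, hc⟩ := Submodule.mem_span_singleton.mp hzS
    by_cases hc0 : c = 0
    · simp [← hc, hc0]
    · exfalso
      apply hu1W
      have : u1 = c⁻¹ • z := by rw [← hc, smul_smul, inv_mul_cancel₀ hc0, one_smul]
      rw [this]
      exact Submodule.smul_mem _ _ hzW
  have hfr : Module.finrank k ↥(W ⊔ Submodule.span k {u1}) = nW + 1 := by
    have := Submodule.finrank_sup_add_finrank_inf_eq W (Submodule.span k {u1})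
    rw [hinf, finrank_bot, add_zero, finrank_span_singleton hu1ne] at this
    exact this
  have hfrle : Module.finrank k ↥(W ⊔ Submodule.span k {u1}) ≤ Module.finrank k U :=
    Submodule.finrank_le _
  have hhnW : h = nW + 1 := le_antisymm hhle (by omega)
  have hWtop : W ⊔ Submodule.span k {u1} = ⊤ := by
    apply Submodule.eq_top_of_finrank_eq
    omega
  -- step 19 : m = span ({y1} ∪ range vA)
  have heqxi : (maximalIdeal A).subtype '' Set.range xi = Set.range vA := by
    ext z
    constructor
    · rintro ⟨w', ⟨i, rfl⟩, rfl⟩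
      exact ⟨i, rfl⟩
    · rintro ⟨i, rfl⟩
      exact ⟨xi i, ⟨i, rfl⟩, rfl⟩
  have htopk : Submodule.span k (θ '' ({x1'} ∪ Set.range xi)) = ⊤ := by
    rw [Set.image_union, Set.image_singleton, Submodule.span_union, ← hWxi, sup_comm]
    exact hWtop
  have hspanTot : Submodule.span A (({x1'} ∪ Set.range xi : Set ↥(maximalIdeal A))) = ⊤ :=
    CotangentSpace.span_image_eq_top_iff.mp htopk
  have hmspan : maximalIdeal A = Ideal.span ({y1} ∪ Set.range vA) := by
    have hmap := congrArg (Submodule.map (maximalIdeal A).subtype) hspanTot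
    rw [Submodule.map_span, Submodule.map_top, Submodule.range_subtype] at hmap
    rw [← hmap]
    congr 1
    rw [Set.image_union, Set.image_singleton, heqxi]
    rfl
  -- step 20 : build y
  set y : ℕ → A := fun j => if j = 1 then y1 else
    (if hj : 2 ≤ j ∧ j ≤ h then vA ⟨j-2, by omega⟩ else 0) with hy
  have hy1' : y 1 = y1 := by simp [hy]
  have hyj : ∀ j, 2 ≤ j → j ≤ h → ∀ (hlt : j - 2 < nW), y j = vA ⟨j-2, hlt⟩ := by
    intro j h2j hjh hlt
    simp only [hy]
    rw [if_neg (by omega), dif_pos ⟨h2j, hjh⟩]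
  have himage : y '' Set.Icc 1 h = {y1} ∪ Set.range vA := by
    ext z
    simp only [Set.mem_image, Set.mem_Icc, Set.mem_union, Set.mem_singleton_iff, Set.mem_range]
    constructor
    · rintro ⟨j, ⟨hj1, hjh⟩, rfl⟩
      by_cases hj : j = 1
      · subst hj; left; exact hy1'.symm ▸ rfl
      · right
        have h2j : 2 ≤ j := by omega
        have hlt : j - 2 < nW := by omega
        exact ⟨⟨j-2, hlt⟩, (hyj j h2j hjh hlt).symm⟩
    · rintro (rfl | ⟨i, rfl⟩)
      · exact ⟨1, ⟨le_refl 1, hh⟩, hy1'⟩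
      · have hilt := i.isLt
        refine ⟨i.1 + 2, ⟨by omega, by omega⟩, ?_⟩
        have hlt : i.1 + 2 - 2 < nW := by omega
        rw [hyj (i.1+2) (by omega) (by omega) hlt]
        congr 1
  refine ⟨y, ?_, ?_, ?_, ?_⟩
  · rw [himage]
    exact hmspan
  · rw [hy1']
    exact hm2
  · intro j h2j hjh
    have hlt : j - 2 < nW := by omega
    rw [hyj j h2j hjh hlt]
    exact hvAV _
  · intro t ht
    rw [hy1']
    exact hmt t ht


/-- Let `(R,n)` be a regular local ring of dimension `h` with
residue field of characteristic `0`, `I ⊆ n²`, and suppose `A = R/I` is a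
stretched Artinian local ring of socle degree `s ≥ 2` and Cohen–Macaulay type
`τ = h`.  Then there is a minimal generating set `x₁,…,x_h` of `n` with
`I = ({x₁x_j}_{2≤j≤h}, {x_i x_j}_{2≤i≤j≤h}, x₁^{s+1})`. -/
theorem stretched_maximal_type_structure
    (R : Type*) [CommRing R] [IsLocalRing R] [IsNoetherianRing R]
    [CharZero (ResidueField R)]
    (h : ℕ) (hh : 1 ≤ h) (hdim : ringKrullDim R = h)
    (hreg : ∃ s : Finset R, s.card = h ∧ Ideal.span (s : Set R) = maximalIdeal R)
    (I : Ideal R) (hI : I ≤ (maximalIdeal R) ^ 2)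
    (hart : IsArtinianRing (R ⧸ I))
    (s : ℕ) (hs : 2 ≤ s)
    -- `A` is stretched:
    (hstretched : minGen ((Ideal.map (Ideal.Quotient.mk I) (maximalIdeal R)) ^ 2) = 1)
    -- socle degree `s`:
    (hsoc : (Ideal.map (Ideal.Quotient.mk I) (maximalIdeal R)) ^ s ≠ ⊥)
    (htop : (Ideal.map (Ideal.Quotient.mk I) (maximalIdeal R)) ^ (s + 1) = ⊥)
    -- Cohen–Macaulay type `τ = h`:
    (htype : minGen (Submodule.colon (⊥ : Ideal (R ⧸ I)) ((Ideal.map (Ideal.Quotient.mk I) (maximalIdeal R) : Ideal (R ⧸ I)) : Set (R ⧸ I))) = h) :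
    ∃ x : ℕ → R,
      maximalIdeal R = Ideal.span ((fun i => x i) '' Set.Icc 1 h) ∧
      I = Ideal.span
        ({p | ∃ j, 2 ≤ j ∧ j ≤ h ∧ p = x 1 * x j} ∪
         {p | ∃ i j, 2 ≤ i ∧ i ≤ j ∧ j ≤ h ∧ p = x i * x j} ∪
         {x 1 ^ (s + 1)}) := by
  classical
  set π : R →+* R ⧸ I := Ideal.Quotient.mk I with hπ
  have hπsurj : Function.Surjective π := Ideal.Quotient.mk_surjective
  have hInetop : I ≠ ⊤ := by
    intro htopI
    have h1 : (1:R) ∈ (maximalIdeal R)^2 := hI (htopI ▸ Submodule.mem_top)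
    have h1m : (1:R) ∈ maximalIdeal R := Ideal.pow_le_self two_ne_zero h1
    exact (maximalIdeal.isMaximal R).ne_top ((Ideal.eq_top_iff_one _).mpr h1m)
  haveI : Nontrivial (R ⧸ I) := Ideal.Quotient.nontrivial_iff.mpr hInetop
  haveI hlocA : IsLocalRing (R ⧸ I) := IsLocalRing.of_surjective' π hπsurj
  haveI hlochom : IsLocalHom π := IsLocalHom.of_surjective π hπsurj
  have hQmax : Ideal.map π (maximalIdeal R) = maximalIdeal (R ⧸ I) := by
    apply le_antisymm
    · exact ((local_hom_TFAE π).out 0 2).mp hlochom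
    · have hcomap : Ideal.comap π (maximalIdeal (R ⧸ I)) = maximalIdeal R :=
        ((local_hom_TFAE π).out 0 4).mp hlochom
      rw [← hcomap]
      rw [Ideal.map_comap_of_surjective π hπsurj]
  have h2A : IsUnit (2 : R ⧸ I) := by
    have h2R : IsUnit (2 : R) := by
      by_contra h2n
      have h2m : (2:R) ∈ maximalIdeal R := h2n
      have : (residue R) 2 = 0 := by
        rwa [← Ideal.Quotient.eq_zero_iff_mem] at h2m
      rw [map_ofNat] at this
      exact two_ne_zero this
    have := h2R.map π
    rwa [map_ofNat] at this
  -- derive keyA hypotheses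
  have hgenA : ∃ T : Finset (R ⧸ I), T.card ≤ h ∧
      Ideal.span (T : Set (R ⧸ I)) = maximalIdeal (R ⧸ I) := by
    obtain ⟨T, hTcard, hTspan⟩ := hreg
    refine ⟨T.image π, le_trans Finset.card_image_le hTcard.le, ?_⟩
    rw [Finset.coe_image, ← Ideal.map_span, hTspan, hQmax]
  have huA : ∃ u : R ⧸ I, (maximalIdeal (R ⧸ I))^2 = Ideal.span {u} := by
    rw [hQmax] at hstretched
    obtain ⟨T, hTcard, hTspan⟩ := minGen_exists hstretched one_ne_zero
    obtain ⟨u, rfl⟩ := Finset.card_eq_one.mp hTcard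
    exact ⟨u, by rw [← hTspan, Finset.coe_singleton]⟩
  obtain ⟨u, hu⟩ := huA
  rw [hQmax] at hsoc htop htype
  have htUB : ∃ T : Finset (R ⧸ I), T.card = h ∧
      Ideal.span (T : Set (R ⧸ I)) = Submodule.colon ⊥ ((maximalIdeal (R ⧸ I) : Ideal (R ⧸ I)) : Set (R ⧸ I)) :=
    minGen_exists htype (by omega)
  have htLB : ∀ T : Finset (R ⧸ I),
      Ideal.span (T : Set (R ⧸ I)) = Submodule.colon ⊥ ((maximalIdeal (R ⧸ I) : Ideal (R ⧸ I)) : Set (R ⧸ I)) → h ≤ T.card :=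
    fun T hT => minGen_le_card htype hT
  obtain ⟨y, hymax, hym2, hysoc, hypow⟩ :=
    keyA (R ⧸ I) h2A h s hh hs hgenA u hu hsoc htop htUB htLB
  -- lift y to R
  choose g hg using hπsurj
  have hπsurj : Function.Surjective π := fun a => ⟨g a, hg a⟩
  set x : ℕ → R := fun i => g (y i) with hx
  have hπx : ∀ i, π (x i) = y i := fun i => hg (y i)
  have hyIcc : ∀ i, 1 ≤ i → i ≤ h → y i ∈ maximalIdeal (R ⧸ I) := by
    intro i h1i hih
    rw [hymax]
    exact Ideal.subset_span ⟨i, ⟨h1i, hih⟩, rfl⟩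
  have hxm : ∀ i, 1 ≤ i → i ≤ h → x i ∈ maximalIdeal R := by
    intro i h1i hih
    by_contra hxu
    have : IsUnit (x i) := not_not.mp hxu
    have hyu : IsUnit (y i) := hπx i ▸ this.map π
    exact (mem_nonunits_iff.mp ((mem_maximalIdeal _).mp (hyIcc i h1i hih))) hyu
  -- Goal 1 : maximalIdeal R = span (x '' Icc 1 h)
  set N : Ideal R := Ideal.span ((fun i => x i) '' Set.Icc 1 h) with hN
  have hNle : N ≤ maximalIdeal R := by
    rw [hN, Ideal.span_le]
    rintro z ⟨i, ⟨h1i, hih⟩, rfl⟩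
    exact hxm i h1i hih
  have hmapN : Ideal.map π N = maximalIdeal (R ⧸ I) := by
    rw [hN, Ideal.map_span, hymax]
    congr 1
    ext z
    constructor
    · rintro ⟨w, ⟨i, hi, rfl⟩, rfl⟩
      exact ⟨i, hi, (hπx i).symm⟩
    · rintro ⟨i, hi, rfl⟩
      exact ⟨x i, ⟨i, hi, rfl⟩, hπx i⟩
  have hmN : maximalIdeal R = N := by
    apply le_antisymm _ hNle
    have hstep : maximalIdeal R ≤ N ⊔ (maximalIdeal R) • (maximalIdeal R) := by
      intro a ha
      have hπa : π a ∈ Ideal.map π N := by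
        rw [hmapN, ← hQmax]
        exact Ideal.mem_map_of_mem π ha
      have : a ∈ Ideal.comap π (Ideal.map π N) := hπa
      rw [Ideal.comap_map_of_surjective π hπsurj] at this
      have hker : Ideal.comap π ⊥ = I := by
        ext z
        simp [hπ, Ideal.Quotient.eq_zero_iff_mem]
      rw [hker] at this
      obtain ⟨b, hb, c, hc, habc⟩ := Submodule.mem_sup.mp this
      have : a ∈ N ⊔ (maximalIdeal R)^2 := Submodule.mem_sup.mpr ⟨b, hb, c, hI hc, habc⟩
      rwa [smul_eq_mul, ← pow_two]
    exact Submodule.le_of_le_smul_of_le_jacobson_bot (IsNoetherian.noetherian _)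
      (IsLocalRing.jacobson_eq_maximalIdeal ⊥ bot_ne_top).ge hstep
  -- Goal 2
  set S : Set R := ({p | ∃ j, 2 ≤ j ∧ j ≤ h ∧ p = x 1 * x j} ∪
         {p | ∃ i j, 2 ≤ i ∧ i ≤ j ∧ j ≤ h ∧ p = x i * x j} ∪
         {x 1 ^ (s + 1)}) with hS
  set J : Ideal R := Ideal.span S with hJ
  have hS1 : ∀ j, 2 ≤ j → j ≤ h → x 1 * x j ∈ J := by
    intro j h2j hjh
    exact Ideal.subset_span (Or.inl (Or.inl ⟨j, h2j, hjh, rfl⟩))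
  have hS2 : ∀ i j, 2 ≤ i → i ≤ j → j ≤ h → x i * x j ∈ J := by
    intro i j h2i hij hjh
    exact Ideal.subset_span (Or.inl (Or.inr ⟨i, j, h2i, hij, hjh, rfl⟩))
  have hS3 : x 1 ^ (s+1) ∈ J := Ideal.subset_span (Or.inr rfl)
  have hsocmul : ∀ j, 2 ≤ j → j ≤ h → ∀ z ∈ maximalIdeal (R ⧸ I), y j * z = 0 := by
    intro j h2j hjh z hz
    have := Submodule.mem_colon.mp (hysoc j h2j hjh) z hz
    simpa using this
  have hJI : J ≤ I := by
    rw [hJ, Ideal.span_le]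
    rintro z ((⟨j, h2j, hjh, rfl⟩ | ⟨i, j, h2i, hij, hjh, rfl⟩) | rfl) <;>
      rw [SetLike.mem_coe, ← Ideal.Quotient.eq_zero_iff_mem]
    · rw [map_mul]
      rw [show (Ideal.Quotient.mk I) (x 1) = y 1 from hπx 1,
        show (Ideal.Quotient.mk I) (x j) = y j from hπx j]
      rw [mul_comm]
      exact hsocmul j h2j hjh (y 1) (hyIcc 1 le_rfl hh)
    · rw [map_mul]
      rw [show (Ideal.Quotient.mk I) (x i) = y i from hπx i,
        show (Ideal.Quotient.mk I) (x j) = y j from hπx j]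
      exact hsocmul i h2i (le_trans hij hjh) (y j) (hyIcc j (by omega) hjh)
    · rw [map_pow]
      rw [show (Ideal.Quotient.mk I) (x 1) = y 1 from hπx 1]
      have : y 1 ^ (s+1) ∈ (maximalIdeal (R ⧸ I))^(s+1) :=
        Ideal.pow_mem_pow (hyIcc 1 le_rfl hh) (s+1)
      rw [htop] at this
      simpa using this
  -- power lemma
  have hgenmul : ∀ t, 2 ≤ t → ∀ a ∈ maximalIdeal R,
      x 1 ^ t * a ∈ Ideal.span {x 1 ^ (t+1)} ⊔ J := by
    intro t ht a ha
    rw [hmN, hN] at ha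
    induction ha using Submodule.span_induction with
    | mem z hz =>
      obtain ⟨i, ⟨h1i, hih⟩, rfl⟩ := hz
      by_cases hi1 : i = 1
      · subst hi1
        apply Submodule.mem_sup_left
        rw [← pow_succ]
        exact Ideal.subset_span rfl
      · apply Submodule.mem_sup_right
        obtain ⟨k, rfl⟩ : ∃ k, t = k + 1 := ⟨t-1, by omega⟩
        have : x 1 ^ (k+1) * x i = (x 1 * x i) * x 1 ^ k := by ring
        rw [this]
        exact Ideal.mul_mem_right _ _ (hS1 i (by omega) hih)
    | zero => rw [mul_zero]; exact Submodule.zero_mem _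
    | add a b _ _ hia hib => rw [mul_add]; exact Submodule.add_mem _ hia hib
    | smul c a _ hia =>
      rw [smul_eq_mul, show x 1 ^ t * (c * a) = c * (x 1 ^ t * a) by ring]
      exact Ideal.mul_mem_left _ _ hia
  have hpowJ : ∀ t, 2 ≤ t → (maximalIdeal R)^t ≤ Ideal.span {x 1 ^ t} ⊔ J := by
    intro t ht
    induction t, ht using Nat.le_induction with
    | base =>
      rw [hmN, hN, pow_two, Ideal.span_mul_span]
      rw [Ideal.span_le]
      rintro z hz
      simp only [Set.mem_mul, Set.mem_iUnion, Set.mem_singleton_iff, Set.mem_image, Set.mem_Icc] at hz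
      obtain ⟨a, ⟨i, ⟨h1i, hih⟩, rfl⟩, b, ⟨j, ⟨h1j, hjh⟩, rfl⟩, rfl⟩ := hz
      by_cases hi1 : i = 1
      · subst hi1
        by_cases hj1 : j = 1
        · subst hj1
          apply Submodule.mem_sup_left
          rw [← pow_two]
          exact Ideal.subset_span rfl
        · exact Submodule.mem_sup_right (hS1 j (by omega) hjh)
      · by_cases hj1 : j = 1
        · subst hj1
          rw [mul_comm]
          exact Submodule.mem_sup_right (hS1 i (by omega) hih)
        · by_cases hij : i ≤ j
          · exact Submodule.mem_sup_right (hS2 i j (by omega) hij hjh)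
          · rw [mul_comm]
            exact Submodule.mem_sup_right (hS2 j i (by omega) (by omega) hih)
    | succ t ht ih =>
      rw [pow_succ]
      apply Ideal.mul_le.mpr
      intro r hr a ha
      have hr' := ih hr
      obtain ⟨p, hp, q, hq, hpq⟩ := Submodule.mem_sup.mp hr'
      obtain ⟨c, hc⟩ := Ideal.mem_span_singleton'.mp hp
      have : r * a = c * (x 1 ^ t * a) + q * a := by
        rw [← hpq, ← hc]; ring
      rw [this]
      apply Submodule.add_mem
      · have := hgenmul t ht a ha
        exact Ideal.mul_mem_left _ _ this
      · exact Submodule.mem_sup_right (Ideal.mul_mem_right _ _ hq)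
  -- descent
  have hdesc : ∀ d, d ≤ s - 1 → ∀ r : R, r * x 1 ^ (s+1-d) ∈ I → r * x 1 ^ (s+1-d) ∈ J := by
    intro d
    induction d with
    | zero =>
      intro _ r _
      rw [show s + 1 - 0 = s + 1 from rfl]
      exact Ideal.mul_mem_left _ _ hS3
    | succ d ih =>
      intro hds r hr
      set t := s + 1 - (d+1) with htdef
      have h2t : 2 ≤ t := by omega
      have hts : t ≤ s := by omega
      by_cases hru : IsUnit r
      · exfalso
        obtain ⟨e, he⟩ := hru.exists_left_inv
        have hxt : x 1 ^ t ∈ I := by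
          have : x 1 ^ t = e * (r * x 1 ^ t) := by rw [← mul_assoc, he, one_mul]
          rw [this]
          exact Ideal.mul_mem_left _ _ hr
        have hyt : y 1 ^ t = 0 := by
          rw [← hπx 1, ← map_pow, Ideal.Quotient.eq_zero_iff_mem]
          exact hxt
        have hbot : (maximalIdeal (R ⧸ I))^t = ⊥ := by
          rw [hypow t h2t, hyt, Ideal.span_singleton_eq_bot]
        apply hsoc
        rw [eq_bot_iff, ← hbot]
        exact Ideal.pow_le_pow_right hts
      · have hrm : r ∈ maximalIdeal R := hru
        have hmem : r * x 1 ^ t ∈ (maximalIdeal R)^(t+1) := by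
          rw [pow_succ']
          exact Ideal.mul_mem_mul hrm (Ideal.pow_mem_pow (hxm 1 le_rfl hh) t)
        have := hpowJ (t+1) (by omega) hmem
        obtain ⟨p, hp, q, hq, hpq⟩ := Submodule.mem_sup.mp this
        obtain ⟨c, hc⟩ := Ideal.mem_span_singleton'.mp hp
        have hcI : c * x 1 ^ (t+1) ∈ I := by
          have : c * x 1 ^ (t+1) = r * x 1 ^ t - q := by rw [← hpq, ← hc]; ring
          rw [this]
          exact Ideal.sub_mem _ hr (hJI hq)
        have ht1 : t + 1 = s + 1 - d := by omega
        rw [ht1] at hcI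
        have hcJ := ih (by omega) c hcI
        rw [← ht1] at hcJ
        have : r * x 1 ^ t = c * x 1 ^ (t+1) + q := by rw [← hpq, ← hc]
        rw [this]
        exact Submodule.add_mem _ hcJ hq
  have hIJ : I ≤ J := by
    intro f hf
    have hfm : f ∈ (maximalIdeal R)^2 := hI hf
    have := hpowJ 2 le_rfl hfm
    obtain ⟨p, hp, q, hq, hpq⟩ := Submodule.mem_sup.mp this
    obtain ⟨c, hc⟩ := Ideal.mem_span_singleton'.mp hp
    have hcI : c * x 1 ^ 2 ∈ I := by
      have : c * x 1 ^ 2 = f - q := by rw [← hpq, ← hc]; ring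
      rw [this]
      exact Ideal.sub_mem _ hf (hJI hq)
    have h2eq : (2:ℕ) = s + 1 - (s-1) := by omega
    rw [h2eq] at hcI
    have hcJ := hdesc (s-1) le_rfl c hcI
    rw [← h2eq] at hcJ
    have : f = c * x 1 ^ 2 + q := by rw [← hpq, ← hc]
    rw [this]
    exact Submodule.add_mem _ hcJ hq
  exact ⟨x, hmN, le_antisymm hIJ hJI⟩
end

section
/- Let R be a regular local ring with maximal ideal n and residue field k such that every element of k has a square root in k. Let x₁, …, x_h be a minimal generating set of n, 1 ≤ τ < h, s ≥ 2, units u_{τ+1}, …, u_h of R, and let I(u) = ({x_i x_j}_{1≤i<j≤h}, {x_j²}_{2≤j≤τ}, {x_i² − u_i x₁^s}_{τ+1≤i≤h}). Then there exists a minimal generating set y₁, …, y_h of n such that I(u) = ({y_i y_j}_{1≤i<j≤h}, {y_j²}_{2≤j≤τ}, {y_i² − y₁^s}_{τ+1≤i≤h}). -/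
open IsLocalRing


/-- Key power lemma: for an ideal `K` of "stretched" shape w.r.t. generators
`z` of `n`, we have `n^(s+1) ≤ K`. -/
lemma stretched_pow_le {R : Type*} [CommRing R] (h τ s : ℕ)
    (hτ : 1 ≤ τ) (hτh : τ < h) (hs : 2 ≤ s)
    (z w : ℕ → R) (K n : Ideal R)
    (hn : n = Ideal.span ((fun i => z i) '' Set.Icc 1 h))
    (hwh : IsUnit (w h))
    (hij : ∀ i j, 1 ≤ i → i < j → j ≤ h → z i * z j ∈ K)
    (hsq : ∀ j, 2 ≤ j → j ≤ τ → z j ^ 2 ∈ K)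
    (hst : ∀ i, τ + 1 ≤ i → i ≤ h → z i ^ 2 - w i * z 1 ^ s ∈ K) :
    n ^ (s + 1) ≤ K := by
  have h1h : (1 : ℕ) < h := lt_of_le_of_lt hτ hτh
  have hsth : z h ^ 2 - w h * z 1 ^ s ∈ K := hst h (by omega) le_rfl
  -- z 1 ^ (s+1) ∈ K
  have hz1 : z 1 ^ (s + 1) ∈ K := by
    have e1 : w h * z 1 ^ (s + 1)
        = z h * (z 1 * z h) - (z h ^ 2 - w h * z 1 ^ s) * z 1 := by ring
    have h2 : w h * z 1 ^ (s + 1) ∈ K := by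
      rw [e1]
      exact sub_mem (K.mul_mem_left _ (hij 1 h le_rfl h1h le_rfl))
        (K.mul_mem_right _ hsth)
    have h3 := K.mul_mem_left (↑hwh.unit⁻¹) h2
    rwa [← mul_assoc, IsUnit.val_inv_mul, one_mul] at h3
  obtain ⟨s', rfl⟩ : ∃ s', s = s' + 2 := ⟨s - 2, by omega⟩
  -- products of two generators
  have pair : ∀ a ∈ (fun i => z i) '' Set.Icc 1 h, ∀ b ∈ (fun i => z i) '' Set.Icc 1 h,
      a * b ∈ K ⊔ Ideal.span {z 1 ^ 2} := by
    rintro a ⟨i, ⟨hi1, hih⟩, rfl⟩ b ⟨j, ⟨hj1, hjh⟩, rfl⟩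
    rcases lt_trichotomy i j with hlt | rfl | hgt
    · exact Ideal.mem_sup_left (hij i j hi1 hlt hjh)
    · by_cases hic : i = 1
      · subst hic
        refine Ideal.mem_sup_right ?_
        have : z 1 * z 1 = z 1 ^ 2 := by ring
        rw [this]
        exact Ideal.subset_span rfl
      · by_cases hiτ : i ≤ τ
        · have : z i * z i = z i ^ 2 := by ring
          rw [this]
          exact Ideal.mem_sup_left (hsq i (by omega) hiτ)
        · have e : z i * z i
              = (z i ^ 2 - w i * z 1 ^ (s' + 2)) + (w i * z 1 ^ s') * z 1 ^ 2 := by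
            ring
          rw [e]
          exact add_mem (Ideal.mem_sup_left (hst i (by omega) hih))
            (Ideal.mem_sup_right (Ideal.mul_mem_left _ _ (Ideal.subset_span rfl)))
    · have := hij j i hj1 hgt hih
      rw [mul_comm]
      exact Ideal.mem_sup_left this
  have base2 : n ^ 2 ≤ K ⊔ Ideal.span {z 1 ^ 2} := by
    rw [hn, pow_two, Ideal.span_mul_span']
    rw [Ideal.span_le]
    rintro p ⟨a, ha, b, hb, rfl⟩
    exact pair a ha b hb
  -- inductive step
  have step : ∀ k : ℕ, n ^ (k + 2) ≤ K ⊔ Ideal.span {z 1 ^ (k + 2)} := by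
    intro k
    induction k with
    | zero => exact base2
    | succ k ih =>
      have e : n ^ (k + 1 + 2) = n ^ (k + 2) * n := by ring
      rw [e]
      calc n ^ (k + 2) * n ≤ (K ⊔ Ideal.span {z 1 ^ (k + 2)}) * n :=
            Ideal.mul_mono_left ih
        _ = K * n ⊔ Ideal.span {z 1 ^ (k + 2)} * n := Ideal.sup_mul _ _ _
        _ ≤ K ⊔ Ideal.span {z 1 ^ (k + 1 + 2)} := by
            apply sup_le
            · exact le_trans Ideal.mul_le_left le_sup_left
            · rw [hn, Ideal.span_mul_span']
              rw [Ideal.span_le]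
              rintro p ⟨a, ha, b, ⟨i, ⟨hi1, hih⟩, rfl⟩, rfl⟩
              rcases ha with rfl
              show z 1 ^ (k + 2) * z i ∈ (K ⊔ Ideal.span {z 1 ^ (k + 1 + 2)} : Ideal R)
              by_cases hic : i = 1
              · subst hic
                refine Ideal.mem_sup_right ?_
                have : z 1 ^ (k + 2) * z 1 = z 1 ^ (k + 1 + 2) := by ring
                rw [this]
                exact Ideal.subset_span rfl
              · have e2 : z 1 ^ (k + 2) * z i = z 1 ^ (k + 1) * (z 1 * z i) := by ring
                rw [e2]
                exact Ideal.mem_sup_left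
                  (K.mul_mem_left _ (hij 1 i le_rfl (by omega) hih))
  have fin : n ^ (s' + 2 + 1) ≤ K ⊔ Ideal.span {z 1 ^ (s' + 2 + 1)} := by
    have := step (s' + 1)
    have e : s' + 1 + 2 = s' + 2 + 1 := by ring
    rwa [e] at this
  refine le_trans fin (sup_le le_rfl ?_)
  rw [Ideal.span_le, Set.singleton_subset_iff]
  exact hz1

/-- Square roots of units modulo `n²`. -/
lemma sqrt_unit_mod_sq {R : Type*} [CommRing R] [IsLocalRing R]
    (hsqrt : ∀ b : ResidueField R, ∃ c : ResidueField R, c ^ 2 = b)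
    (hchar : (2 : ResidueField R) ≠ 0)
    (u : R) (hu : IsUnit u) :
    ∃ v : R, IsUnit v ∧ v ^ 2 * u - 1 ∈ (maximalIdeal R) ^ 2 := by
  have h2 : IsUnit (2 : R) := by
    rw [← IsLocalRing.notMem_maximalIdeal]
    intro hm
    apply hchar
    have h0 : residue R 2 = 0 := Ideal.Quotient.eq_zero_iff_mem.mpr hm
    rwa [map_ofNat] at h0
  obtain ⟨t, ht⟩ := h2.exists_right_inv
  have hru : residue R u ≠ 0 := (residue_ne_zero_iff_isUnit u).mpr hu
  obtain ⟨c, hc⟩ := hsqrt (residue R u)⁻¹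
  have hc0 : c ≠ 0 := by
    intro h0
    apply hru
    have h1 : (residue R u)⁻¹ = 0 := by rw [← hc, h0]; ring
    exact inv_eq_zero.mp h1
  obtain ⟨v₀, hv₀⟩ := residue_surjective (R := R) c
  have hv₀u : IsUnit v₀ := (residue_ne_zero_iff_isUnit v₀).mp (hv₀ ▸ hc0)
  have hε : v₀ ^ 2 * u - 1 ∈ maximalIdeal R := by
    have : residue R (v₀ ^ 2 * u - 1) = 0 := by
      rw [map_sub, map_mul, map_pow, map_one, hv₀, hc, inv_mul_cancel₀ hru, sub_self]
    exact Ideal.Quotient.eq_zero_iff_mem.mp this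
  refine ⟨v₀ * (1 - t * (v₀ ^ 2 * u - 1)), ?_, ?_⟩
  · refine hv₀u.mul ?_
    exact IsLocalRing.isUnit_one_sub_self_of_mem_nonunits _
      ((IsLocalRing.mem_maximalIdeal _).mp
        ((maximalIdeal R).mul_mem_left t hε))
  · have key : (v₀ * (1 - t * (v₀ ^ 2 * u - 1))) ^ 2 * u - 1
        = (v₀ ^ 2 * u - 1) ^ 2 * (t ^ 2 * (v₀ ^ 2 * u) - 1) := by
      linear_combination (-((v₀ ^ 2 * u - 1) + (v₀ ^ 2 * u - 1) ^ 2)) * ht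
    rw [key]
    exact Ideal.mul_mem_right _ _ (Ideal.pow_mem_pow hε 2)

/-- Let `R` be a regular local ring with residue field `k`
closed under square roots (and of characteristic `≠ 2`), `x₁,…,x_h` a minimal
generating set of `n`, `1 ≤ τ < h`, `s ≥ 2`, and `u_{τ+1},…,u_h` units.  For the
ideal `I(u) = ({x_i x_j}_{i<j}, {x_j²}_{2≤j≤τ}, {x_i² − u_i x₁^s}_{τ+1≤i≤h})`
there is a minimal generating set `y₁,…,y_h` of `n` with
`I(u) = ({y_i y_j}_{i<j}, {y_j²}_{2≤j≤τ}, {y_i² − y₁^s}_{τ+1≤i≤h})`. -/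
theorem stretched_units_normalization
    (R : Type*) [CommRing R] [IsLocalRing R] [IsNoetherianRing R]
    (hsqrt : ∀ b : ResidueField R, ∃ c : ResidueField R, c ^ 2 = b)
    (hchar : (2 : ResidueField R) ≠ 0)
    (h τ s : ℕ) (hτ : 1 ≤ τ) (hτh : τ < h) (hs : 2 ≤ s)
    (hdim : ringKrullDim R = h)
    (x u : ℕ → R) (hu : ∀ i, τ + 1 ≤ i → i ≤ h → IsUnit (u i))
    (hgen : maximalIdeal R = Ideal.span ((fun i => x i) '' Set.Icc 1 h))
    (I : Ideal R)
    (hI : I = Ideal.span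
      ({p | ∃ i j, 1 ≤ i ∧ i < j ∧ j ≤ h ∧ p = x i * x j} ∪
       {p | ∃ j, 2 ≤ j ∧ j ≤ τ ∧ p = x j ^ 2} ∪
       {p | ∃ i, τ + 1 ≤ i ∧ i ≤ h ∧ p = x i ^ 2 - u i * x 1 ^ s})) :
    ∃ y : ℕ → R,
      maximalIdeal R = Ideal.span ((fun i => y i) '' Set.Icc 1 h) ∧
      I = Ideal.span
        ({p | ∃ i j, 1 ≤ i ∧ i < j ∧ j ≤ h ∧ p = y i * y j} ∪
         {p | ∃ j, 2 ≤ j ∧ j ≤ τ ∧ p = y j ^ 2} ∪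
         {p | ∃ i, τ + 1 ≤ i ∧ i ≤ h ∧ p = y i ^ 2 - y 1 ^ s}) := by
  classical
  -- choose square roots of the units modulo n²
  have hchoice : ∀ i : ℕ, ∃ v : R, IsUnit v ∧
      (τ + 1 ≤ i → i ≤ h → v ^ 2 * u i - 1 ∈ (maximalIdeal R) ^ 2) := by
    intro i
    by_cases hi : τ + 1 ≤ i ∧ i ≤ h
    · obtain ⟨v, hv1, hv2⟩ := sqrt_unit_mod_sq hsqrt hchar (u i) (hu i hi.1 hi.2)
      exact ⟨v, hv1, fun _ _ => hv2⟩
    · exact ⟨1, isUnit_one, fun h1 h2 => absurd ⟨h1, h2⟩ hi⟩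
  choose v hvu hvm using hchoice
  set e : ℕ → R := fun i => if i ≤ τ then 1 else v i with he_def
  have heu : ∀ i, IsUnit (e i) := by
    intro i
    by_cases hi : i ≤ τ <;> simp only [he_def, hi, if_pos, if_neg, if_true, if_false]
    · exact isUnit_one
    · exact hvu i
  have heτ : ∀ i, i ≤ τ → e i = 1 := fun i hi => if_pos hi
  have hev : ∀ i, τ + 1 ≤ i → e i = v i := fun i hi => if_neg (by omega)
  have he1 : e 1 = 1 := heτ 1 hτ
  have hx1 : x 1 ∈ maximalIdeal R := by
    rw [hgen]; exact Ideal.subset_span ⟨1, ⟨le_rfl, by omega⟩, rfl⟩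
  -- the new generators span the maximal ideal
  have hgenY : maximalIdeal R
      = Ideal.span ((fun i => e i * x i) '' Set.Icc 1 h) := by
    apply le_antisymm
    · rw [hgen, Ideal.span_le]
      rintro p ⟨i, hi, rfl⟩
      have hxi : x i = ↑(heu i).unit⁻¹ * (e i * x i) := by
        rw [← mul_assoc, IsUnit.val_inv_mul, one_mul]
      show x i ∈ _
      rw [hxi]
      exact Ideal.mul_mem_left _ _ (Ideal.subset_span ⟨i, hi, rfl⟩)
    · rw [Ideal.span_le]
      rintro p ⟨i, hi, rfl⟩
      show e i * x i ∈ maximalIdeal R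
      refine Ideal.mul_mem_left _ _ ?_
      rw [hgen]
      exact Ideal.subset_span ⟨i, hi, rfl⟩
  refine ⟨fun i => e i * x i, hgenY, ?_⟩
  set J : Ideal R := Ideal.span
      ({p | ∃ i j, 1 ≤ i ∧ i < j ∧ j ≤ h ∧ p = (e i * x i) * (e j * x j)} ∪
       {p | ∃ j, 2 ≤ j ∧ j ≤ τ ∧ p = (e j * x j) ^ 2} ∪
       {p | ∃ i, τ + 1 ≤ i ∧ i ≤ h ∧ p = (e i * x i) ^ 2 - (e 1 * x 1) ^ s})
      with hJ
  show I = J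
  -- generator memberships
  have memI_ij : ∀ i j, 1 ≤ i → i < j → j ≤ h → x i * x j ∈ I := by
    intro i j h1 h2 h3
    rw [hI]
    exact Ideal.subset_span
      (Set.mem_union_left _ (Set.mem_union_left _ ⟨i, j, h1, h2, h3, rfl⟩))
  have memI_sq : ∀ j, 2 ≤ j → j ≤ τ → x j ^ 2 ∈ I := by
    intro j h1 h2
    rw [hI]
    exact Ideal.subset_span
      (Set.mem_union_left _ (Set.mem_union_right _ ⟨j, h1, h2, rfl⟩))
  have memI_st : ∀ i, τ + 1 ≤ i → i ≤ h → x i ^ 2 - u i * x 1 ^ s ∈ I := by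
    intro i h1 h2
    rw [hI]
    exact Ideal.subset_span (Set.mem_union_right _ ⟨i, h1, h2, rfl⟩)
  have memJ_ij : ∀ i j, 1 ≤ i → i < j → j ≤ h → (e i * x i) * (e j * x j) ∈ J := by
    intro i j h1 h2 h3
    exact Ideal.subset_span
      (Set.mem_union_left _ (Set.mem_union_left _ ⟨i, j, h1, h2, h3, rfl⟩))
  have memJ_sq : ∀ j, 2 ≤ j → j ≤ τ → (e j * x j) ^ 2 ∈ J := by
    intro j h1 h2
    exact Ideal.subset_span
      (Set.mem_union_left _ (Set.mem_union_right _ ⟨j, h1, h2, rfl⟩))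
  have memJ_st : ∀ i, τ + 1 ≤ i → i ≤ h →
      (e i * x i) ^ 2 - (e 1 * x 1) ^ s ∈ J := by
    intro i h1 h2
    exact Ideal.subset_span (Set.mem_union_right _ ⟨i, h1, h2, rfl⟩)
  -- the power lemma for both ideals
  have hpowI : (maximalIdeal R) ^ (s + 1) ≤ I :=
    stretched_pow_le h τ s hτ hτh hs x u I (maximalIdeal R) hgen
      (hu h (by omega) le_rfl) memI_ij memI_sq memI_st
  have hpowJ : (maximalIdeal R) ^ (s + 1) ≤ J := by
    refine stretched_pow_le h τ s hτ hτh hs (fun i => e i * x i) (fun _ => (1 : R))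
      J (maximalIdeal R) hgenY isUnit_one memJ_ij memJ_sq ?_
    intro i h1 h2
    have := memJ_st i h1 h2
    rwa [show (1 : R) * (e 1 * x 1) ^ s = (e 1 * x 1) ^ s from one_mul _]
  -- the error terms land deep in powers of the maximal ideal
  have hmx : ∀ i, τ + 1 ≤ i → i ≤ h →
      (v i ^ 2 * u i - 1) * x 1 ^ s ∈ (maximalIdeal R) ^ (s + 1) := by
    intro i h1 h2
    have hm := hvm i h1 h2
    have hmem := Ideal.mul_mem_mul hm (Ideal.pow_mem_pow hx1 s)
    rw [← pow_add] at hmem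
    exact Ideal.pow_le_pow_right (by omega) hmem
  apply le_antisymm
  · -- I ≤ J
    rw [hI, Ideal.span_le]
    rintro p ((⟨i, j, h1, h2, h3, rfl⟩ | ⟨j, h1, h2, rfl⟩) | ⟨i, h1, h2, rfl⟩)
    · -- x i * x j
      have hgenm := memJ_ij i j h1 h2 h3
      have hinv_i : (↑(heu i).unit⁻¹ : R) * e i = 1 := IsUnit.val_inv_mul _
      have hinv_j : (↑(heu j).unit⁻¹ : R) * e j = 1 := IsUnit.val_inv_mul _
      have hmem := J.mul_mem_left ((↑(heu i).unit⁻¹ : R) * ↑(heu j).unit⁻¹) hgenm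
      have hid : ((↑(heu i).unit⁻¹ : R) * ↑(heu j).unit⁻¹) *
          ((e i * x i) * (e j * x j)) = x i * x j := by
        linear_combination (x i * x j * ((↑(heu i).unit⁻¹ : R) * e i)) * hinv_j +
          (x i * x j) * hinv_i
      show x i * x j ∈ J
      rwa [hid] at hmem
    · -- x j ^ 2
      have hgenm := memJ_sq j h1 h2
      rw [heτ j h2, one_mul] at hgenm
      exact hgenm
    · -- x i ^ 2 - u i * x 1 ^ s
      show x i ^ 2 - u i * x 1 ^ s ∈ J
      have hgenm := memJ_st i h1 h2
      rw [hev i h1, he1, one_mul] at hgenm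
      have hwv : (↑(hvu i).unit⁻¹ : R) * v i = 1 := IsUnit.val_inv_mul _
      have hid : x i ^ 2 - u i * x 1 ^ s
          = (↑(hvu i).unit⁻¹ : R) ^ 2 * ((v i * x i) ^ 2 - x 1 ^ s)
            - (↑(hvu i).unit⁻¹ : R) ^ 2 * ((v i ^ 2 * u i - 1) * x 1 ^ s) := by
        linear_combination
          (-(((↑(hvu i).unit⁻¹ : R) * v i + 1) * (x i ^ 2 - u i * x 1 ^ s))) * hwv
      rw [hid]
      exact sub_mem (J.mul_mem_left _ hgenm)
        (J.mul_mem_left _ (hpowJ (hmx i h1 h2)))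
  · -- J ≤ I
    rw [hJ, Ideal.span_le]
    rintro p ((⟨i, j, h1, h2, h3, rfl⟩ | ⟨j, h1, h2, rfl⟩) | ⟨i, h1, h2, rfl⟩)
    · have hid : (e i * x i) * (e j * x j) = (e i * e j) * (x i * x j) := by ring
      rw [hid]
      exact I.mul_mem_left _ (memI_ij i j h1 h2 h3)
    · rw [heτ j h2, one_mul]
      exact memI_sq j h1 h2
    · show (e i * x i) ^ 2 - (e 1 * x 1) ^ s ∈ I
      rw [hev i h1, he1, one_mul]
      have hid : (v i * x i) ^ 2 - x 1 ^ s
          = v i ^ 2 * (x i ^ 2 - u i * x 1 ^ s) + (v i ^ 2 * u i - 1) * x 1 ^ s := by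
        ring
      rw [hid]
      exact add_mem (I.mul_mem_left _ (memI_st i h1 h2)) (hpowI (hmx i h1 h2))
end
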